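/- arXiv:1405.4693 — 5 statements merged into one kernel-verified Lean document; each statement's English description precedes it below -/
import Mathlib

section
/- Suppose μ is symmetric. Then for every n ∈ ℕ with n ≥ 1: Σ_{k=0}^n p_{2k} p_{2n−2k+1} = Σ_{k=0}^n p_{2k+1} q_{2n−2k}, where p_j := p_j(1) and q_j := q_j(1). -/
open MeasureTheory Set

section Helpers

variable {μ : Measure ℝ} [IsProbabilityMeasure μ]

lemma ae_mem_Icc' (hsupp : μ (Set.Icc (0:ℝ) 1)ᶜ = 0) : ∀ᵐ t ∂μ, t ∈ Set.Icc (0:ℝ) 1 := by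
  rw [MeasureTheory.ae_iff]; exact hsupp

omit [IsProbabilityMeasure μ] in
lemma mu_Iio' (hsupp : μ (Set.Icc (0:ℝ) 1)ᶜ = 0) : μ (Set.Iio (0:ℝ)) = 0 :=
  measure_mono_null (fun x hx => by
    simp only [mem_compl_iff, mem_Icc]; push_neg; intro h; linarith [mem_Iio.mp hx]) hsupp

omit [IsProbabilityMeasure μ] in
lemma mu_Ioi' (hsupp : μ (Set.Icc (0:ℝ) 1)ᶜ = 0) : μ (Set.Ioi (1:ℝ)) = 0 :=
  measure_mono_null (fun x hx => by
    simp only [mem_compl_iff, mem_Icc]; push_neg; intro h; linarith [mem_Ioi.mp hx]) hsupp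

lemma refl_map' (hsupp : μ (Set.Icc (0:ℝ) 1)ᶜ = 0)
    (hsym : ∀ x ∈ Set.Icc (0:ℝ) 1, μ (Set.Icc (0:ℝ) x) = μ (Set.Icc (1-x) 1)) :
    Measure.map (fun t => 1 - t) μ = μ := by
  have hIcc1 : μ (Set.Icc (0:ℝ) 1) = 1 := by
    have h := measure_add_measure_compl (μ := μ) (measurableSet_Icc (a := (0:ℝ)) (b := 1))
    rw [hsupp, add_zero] at h; simpa using h
  have hIio := mu_Iio' hsupp
  have hIoi := mu_Ioi' hsupp
  have hIci : ∀ c : ℝ, μ (Set.Ici c) = μ (Set.Icc c 1) := by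
    intro c
    refine le_antisymm ?_ (measure_mono Set.Icc_subset_Ici_self)
    calc μ (Set.Ici c) ≤ μ (Set.Icc c 1 ∪ Set.Ioi 1) := by
          refine measure_mono fun x hx => ?_
          rcases le_or_gt x 1 with h | h
          · exact Or.inl ⟨mem_Ici.mp hx, h⟩
          · exact Or.inr h
      _ ≤ μ (Set.Icc c 1) + μ (Set.Ioi 1) := measure_union_le _ _
      _ = μ (Set.Icc c 1) := by rw [hIoi, add_zero]
  have hIic : ∀ c : ℝ, μ (Set.Iic c) = μ (Set.Icc 0 c) := by
    intro c
    refine le_antisymm ?_ (measure_mono Set.Icc_subset_Iic_self)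
    calc μ (Set.Iic c) ≤ μ (Set.Icc 0 c ∪ Set.Iio 0) := by
          refine measure_mono fun x hx => ?_
          rcases lt_or_ge x 0 with h | h
          · exact Or.inr h
          · exact Or.inl ⟨h, mem_Iic.mp hx⟩
      _ ≤ μ (Set.Icc 0 c) + μ (Set.Iio 0) := measure_union_le _ _
      _ = μ (Set.Icc 0 c) := by rw [hIio, add_zero]
  refine Measure.ext_of_Iic _ _ (fun a => ?_)
  rw [Measure.map_apply (by fun_prop) measurableSet_Iic]
  have hpre : (fun t : ℝ => 1 - t) ⁻¹' Set.Iic a = Set.Ici (1 - a) := by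
    ext t; simp only [mem_preimage, mem_Iic, mem_Ici]; constructor <;> intro h <;> linarith
  rw [hpre]
  rcases lt_or_ge a 0 with ha | ha
  · have h1 : μ (Set.Iic a) = 0 :=
      measure_mono_null (fun x hx => mem_Iio.mpr (lt_of_le_of_lt (mem_Iic.mp hx) ha)) hIio
    have h2 : μ (Set.Ici (1 - a)) = 0 :=
      measure_mono_null (fun x hx => mem_Ioi.mpr (lt_of_lt_of_le (by linarith) (mem_Ici.mp hx))) hIoi
    rw [h1, h2]
  rcases le_or_gt a 1 with ha1 | ha1
  · rw [hIci, hIic, hsym a ⟨ha, ha1⟩]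
  · have h1 : μ (Set.Iic a) = 1 :=
      le_antisymm (le_trans (measure_mono (subset_univ _)) (by simp))
        (hIcc1 ▸ measure_mono (fun x hx => le_trans hx.2 ha1.le))
    have h2 : μ (Set.Ici (1 - a)) = 1 :=
      le_antisymm (le_trans (measure_mono (subset_univ _)) (by simp))
        (hIcc1 ▸ measure_mono (fun x hx => by simp only [mem_Ici]; linarith [hx.1]))
    rw [h1, h2]

lemma refl_integral' (hmap : Measure.map (fun t : ℝ => 1 - t) μ = μ)
    (f : ℝ → ℝ) (hf : Measurable f) :
    ∫ t, f t ∂μ = ∫ t, f (1 - t) ∂μ := by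
  have h := MeasureTheory.integral_map (μ := μ) (φ := fun t : ℝ => 1 - t) (f := f)
    (by fun_prop) (by rw [hmap]; exact hf.aestronglyMeasurable)
  rw [hmap] at h
  simpa using h

lemma refl_setIntegral' (hmap : Measure.map (fun t : ℝ => 1 - t) μ = μ)
    (f : ℝ → ℝ) (hf : Measurable f) (x : ℝ) :
    ∫ t in Set.Icc 0 (1-x), f t ∂μ = ∫ t in Set.Icc x 1, f (1-t) ∂μ := by
  have hpre : (fun t : ℝ => 1 - t) ⁻¹' Set.Icc 0 (1-x) = Set.Icc x 1 := by
    ext t; simp only [mem_preimage, mem_Icc]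
    constructor <;> intro h <;> constructor <;> linarith [h.1, h.2]
  rw [← integral_indicator measurableSet_Icc, ← integral_indicator measurableSet_Icc,
    refl_integral' hmap _ (hf.indicator measurableSet_Icc)]
  congr 1
  funext t
  have h2 : ((fun t : ℝ => 1 - t) ⁻¹' Set.Icc 0 (1-x)).indicator (f ∘ fun t : ℝ => 1 - t) t
      = (Set.Icc (0:ℝ) (1-x)).indicator f (1 - t) := Set.indicator_comp_right (fun t : ℝ => 1 - t)
  rw [hpre] at h2
  exact h2.symm

lemma integrable_of_bd' (hsupp : μ (Set.Icc (0:ℝ) 1)ᶜ = 0) {f : ℝ → ℝ} (hf : Measurable f)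
    (hbd : ∀ x ∈ Set.Icc (0:ℝ) 1, f x ∈ Set.Icc (0:ℝ) 1) : Integrable f μ := by
  refine (integrable_const (1:ℝ)).mono' hf.aestronglyMeasurable ?_
  filter_upwards [ae_mem_Icc' hsupp] with t ht
  rw [Real.norm_eq_abs, abs_le]
  exact ⟨by linarith [(hbd t ht).1], (hbd t ht).2⟩

lemma helper_mu' (hsupp : μ (Set.Icc (0:ℝ) 1)ᶜ = 0) {f : ℝ → ℝ} (hf : Measurable f)
    (hbd : ∀ x ∈ Set.Icc (0:ℝ) 1, f x ∈ Set.Icc (0:ℝ) 1) :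
    Measurable (fun x => ∫ t in Set.Icc (0:ℝ) x, f t ∂μ) ∧
      ∀ x, (∫ t in Set.Icc (0:ℝ) x, f t ∂μ) ∈ Set.Icc (0:ℝ) 1 := by
  have hint : Integrable f μ := integrable_of_bd' hsupp hf hbd
  have hae0 : ∀ᵐ t ∂μ, 0 ≤ f t := by
    filter_upwards [ae_mem_Icc' hsupp] with t ht; exact (hbd t ht).1
  have hmono : Monotone (fun x => ∫ t in Set.Icc (0:ℝ) x, f t ∂μ) := by
    intro x y hxy
    exact setIntegral_mono_set hint.integrableOn (ae_restrict_of_ae hae0)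
      (HasSubset.Subset.eventuallyLE (Set.Icc_subset_Icc le_rfl hxy))
  have hub : ∀ x, (∫ t in Set.Icc (0:ℝ) x, f t ∂μ) ≤ 1 := by
    intro x
    calc (∫ t in Set.Icc (0:ℝ) x, f t ∂μ) ≤ ∫ t in Set.univ, f t ∂μ :=
          setIntegral_mono_set hint.integrableOn (ae_restrict_of_ae hae0)
            (HasSubset.Subset.eventuallyLE (Set.subset_univ _))
      _ = ∫ t, f t ∂μ := by rw [Measure.restrict_univ]
      _ ≤ ∫ _t, (1:ℝ) ∂μ := by
          refine integral_mono_ae hint (integrable_const 1) ?_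
          filter_upwards [ae_mem_Icc' hsupp] with t ht; exact (hbd t ht).2
      _ = 1 := by simp
  refine ⟨hmono.measurable, fun x => ⟨?_, hub x⟩⟩
  exact setIntegral_nonneg_ae measurableSet_Icc
    (by filter_upwards [hae0] with t ht; exact fun _ => ht)

lemma intInt_of_bd' {f : ℝ → ℝ} (hf : Measurable f)
    (hbd : ∀ x, f x ∈ Set.Icc (0:ℝ) 1) (a b : ℝ) : IntervalIntegrable f volume a b := by
  have h : ∀ c d : ℝ, IntegrableOn f (Set.Ioc c d) volume := by
    intro c d
    refine Integrable.mono' (g := fun _ => (1:ℝ)) ?_ hf.aestronglyMeasurable ?_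
    · exact integrableOn_const measure_Ioc_lt_top.ne
    · refine Filter.Eventually.of_forall fun t => ?_
      show ‖f t‖ ≤ 1
      rw [Real.norm_eq_abs, abs_le]
      exact ⟨by linarith [(hbd t).1], (hbd t).2⟩
  exact ⟨h a b, h b a⟩

lemma helper_leb' {f : ℝ → ℝ} (hf : Measurable f)
    (hbd : ∀ x, f x ∈ Set.Icc (0:ℝ) 1) :
    Measurable (fun x => ∫ t in (0:ℝ)..x, f t) ∧
      ∀ x ∈ Set.Icc (0:ℝ) 1, (∫ t in (0:ℝ)..x, f t) ∈ Set.Icc (0:ℝ) 1 := by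
  have hmono : Monotone (fun x => ∫ t in (0:ℝ)..x, f t) := by
    intro x y hxy
    have h := intervalIntegral.integral_add_adjacent_intervals
      (intInt_of_bd' hf hbd 0 x) (intInt_of_bd' hf hbd x y)
    have h2 : 0 ≤ ∫ t in x..y, f t :=
      intervalIntegral.integral_nonneg hxy (fun u _ => (hbd u).1)
    simp only at h ⊢
    linarith
  refine ⟨hmono.measurable, fun x hx => ⟨?_, ?_⟩⟩
  · exact intervalIntegral.integral_nonneg hx.1 (fun u _ => (hbd u).1)
  · calc (∫ t in (0:ℝ)..x, f t) ≤ ∫ _t in (0:ℝ)..x, (1:ℝ) := by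
          refine intervalIntegral.integral_mono_on hx.1 (intInt_of_bd' hf hbd 0 x)
            intervalIntegrable_const (fun u _ => (hbd u).2)
      _ = x := by simp
      _ ≤ 1 := hx.2

end Helpers

lemma core_pq (μ : Measure ℝ) [IsProbabilityMeasure μ]
    (hsupp : μ (Set.Icc (0:ℝ) 1)ᶜ = 0)
    (p q : ℕ → ℝ → ℝ)
    (hp0 : ∀ x : ℝ, p 0 x = 1) (hq0 : ∀ x : ℝ, q 0 x = 1)
    (hpodd : ∀ (n : ℕ) (x : ℝ), p (2*n+1) x = ∫ t in Set.Icc (0:ℝ) x, p (2*n) t ∂μ)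
    (hpeven : ∀ (n : ℕ) (x : ℝ), p (2*n+2) x = ∫ t in (0:ℝ)..x, p (2*n+1) t)
    (hqodd : ∀ (n : ℕ) (x : ℝ), q (2*n+1) x = ∫ t in (0:ℝ)..x, q (2*n) t)
    (hqeven : ∀ (n : ℕ) (x : ℝ), q (2*n+2) x = ∫ t in Set.Icc (0:ℝ) x, q (2*n+1) t ∂μ)
    (hsym : ∀ x ∈ Set.Icc (0:ℝ) 1, μ (Set.Icc (0:ℝ) x) = μ (Set.Icc (1-x) 1)) :
    ∀ m : ℕ, p (2*m) 1 = q (2*m) 1 := by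
  have hmap : Measure.map (fun t : ℝ => 1 - t) μ = μ := refl_map' hsupp hsym
  -- basic properties of p
  have pprop : ∀ n : ℕ, (Measurable (p (2*n)) ∧ ∀ x ∈ Set.Icc (0:ℝ) 1, p (2*n) x ∈ Set.Icc (0:ℝ) 1)
      ∧ (Measurable (p (2*n+1)) ∧ ∀ x, p (2*n+1) x ∈ Set.Icc (0:ℝ) 1) := by
    intro n
    induction n with
    | zero =>
      have e0 : p 0 = fun _ => (1:ℝ) := funext hp0
      have h0 : Measurable (p 0) ∧ ∀ x ∈ Set.Icc (0:ℝ) 1, p 0 x ∈ Set.Icc (0:ℝ) 1 := by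
        rw [e0]; exact ⟨measurable_const, fun x _ => by norm_num⟩
      refine ⟨h0, ?_⟩
      have e1 : p (2*0+1) = fun x => ∫ t in Set.Icc (0:ℝ) x, p (2*0) t ∂μ := funext (hpodd 0)
      rw [e1]
      exact helper_mu' hsupp h0.1 h0.2
    | succ n ih =>
      have e2 : p (2*(n+1)) = fun x => ∫ t in (0:ℝ)..x, p (2*n+1) t := by
        funext x
        have h := hpeven n x
        have : 2*(n+1) = 2*n+2 := by ring
        rw [this]
        exact h
      have h2 : Measurable (p (2*(n+1))) ∧ ∀ x ∈ Set.Icc (0:ℝ) 1, p (2*(n+1)) x ∈ Set.Icc (0:ℝ) 1 := by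
        rw [e2]; exact helper_leb' ih.2.1 ih.2.2
      refine ⟨h2, ?_⟩
      have e3 : p (2*(n+1)+1) = fun x => ∫ t in Set.Icc (0:ℝ) x, p (2*(n+1)) t ∂μ :=
        funext (hpodd (n+1))
      rw [e3]
      exact helper_mu' hsupp h2.1 h2.2
  -- basic properties of q
  have qprop : ∀ n : ℕ, (Measurable (q (2*n)) ∧ ∀ x, q (2*n) x ∈ Set.Icc (0:ℝ) 1)
      ∧ (Measurable (q (2*n+1)) ∧ ∀ x ∈ Set.Icc (0:ℝ) 1, q (2*n+1) x ∈ Set.Icc (0:ℝ) 1) := by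
    intro n
    induction n with
    | zero =>
      have e0 : q 0 = fun _ => (1:ℝ) := funext hq0
      have h0 : Measurable (q 0) ∧ ∀ x, q 0 x ∈ Set.Icc (0:ℝ) 1 := by
        rw [e0]; exact ⟨measurable_const, fun x => by norm_num⟩
      refine ⟨h0, ?_⟩
      have e1 : q (2*0+1) = fun x => ∫ t in (0:ℝ)..x, q (2*0) t := funext (hqodd 0)
      rw [e1]
      exact helper_leb' h0.1 h0.2
    | succ n ih =>
      have e2 : q (2*(n+1)) = fun x => ∫ t in Set.Icc (0:ℝ) x, q (2*n+1) t ∂μ := by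
        funext x
        have h := hqeven n x
        have : 2*(n+1) = 2*n+2 := by ring
        rw [this]
        exact h
      have h2 : Measurable (q (2*(n+1))) ∧ ∀ x, q (2*(n+1)) x ∈ Set.Icc (0:ℝ) 1 := by
        rw [e2]; exact helper_mu' hsupp ih.2.1 ih.2.2
      refine ⟨h2, ?_⟩
      have e3 : q (2*(n+1)+1) = fun x => ∫ t in (0:ℝ)..x, q (2*(n+1)) t := funext (hqodd (n+1))
      rw [e3]
      exact helper_leb' h2.1 h2.2
  -- reflected p
  set P : ℕ → ℝ → ℝ := fun j x => p j (1 - x) with hP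
  have hPmeas : ∀ j, Measurable (p j) → Measurable (P j) := by
    intro j hj
    exact hj.comp (by fun_prop)
  have hPoddrec : ∀ (n : ℕ) (x : ℝ), P (2*n+1) x = ∫ t in Set.Icc x 1, P (2*n) t ∂μ := by
    intro n x
    show p (2*n+1) (1-x) = _
    rw [hpodd n (1-x)]
    exact refl_setIntegral' hmap _ ((pprop n).1.1) x
  have hPevenrec : ∀ (n : ℕ) (x : ℝ), P (2*n+2) x = ∫ t in x..1, P (2*n+1) t := by
    intro n x
    show p (2*n+2) (1-x) = _
    rw [hpeven n (1-x)]
    have h := intervalIntegral.integral_comp_sub_left (a := x) (b := 1) (p (2*n+1)) 1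
    rw [h]
    norm_num
  -- ae set equalities
  have haeIci : ∀ s : ℝ, (Set.Ici s : Set ℝ) =ᵐ[μ] Set.Icc s 1 := by
    intro s
    rw [MeasureTheory.ae_eq_set]
    constructor
    · refine measure_mono_null (fun x hx => ?_) (mu_Ioi' hsupp)
      rcases hx with ⟨h1, h2⟩
      simp only [mem_Icc, not_and, not_le] at h2
      exact mem_Ioi.mpr (h2 (mem_Ici.mp h1))
    · have he : Set.Icc s 1 \ Set.Ici s = ∅ :=
        Set.eq_empty_iff_forall_notMem.mpr (fun x hx => hx.2 hx.1.1)
      rw [he]; exact measure_empty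
  have haeIic : ∀ s : ℝ, (Set.Iic s : Set ℝ) =ᵐ[μ] Set.Icc 0 s := by
    intro s
    rw [MeasureTheory.ae_eq_set]
    constructor
    · refine measure_mono_null (fun x hx => ?_) (mu_Iio' hsupp)
      rcases hx with ⟨h1, h2⟩
      simp only [mem_Icc, not_and, not_le] at h2
      by_contra hc
      simp only [mem_Iio, not_lt] at hc
      exact absurd (h2 hc) (not_lt.mpr (mem_Iic.mp h1))
    · have he : Set.Icc 0 s \ Set.Iic s = ∅ :=
        Set.eq_empty_iff_forall_notMem.mpr (fun x hx => hx.2 hx.1.2)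
      rw [he]; exact measure_empty
  intro m
  cases m with
  | zero =>
    simp only [Nat.mul_zero]
    rw [hp0, hq0]
  | succ M =>
    have h2M : 2*(M+1) = 2*M+2 := by ring
    rw [h2M]
    set ρ : Measure ℝ := volume.restrict (Set.Icc (0:ℝ) 1) with hρ
    haveI hρfin : IsFiniteMeasure ρ := by
      constructor
      rw [hρ, Measure.restrict_apply_univ]
      exact measure_Icc_lt_top
    have hμr : μ.restrict (Set.Icc (0:ℝ) 1) = μ :=
      Measure.restrict_eq_self_of_ae_mem (ae_mem_Icc' hsupp)
    have hρIic : ∀ t ∈ Set.Icc (0:ℝ) 1, ρ.restrict (Set.Iic t) = volume.restrict (Set.Icc 0 t) := by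
      intro t ht
      rw [hρ, Measure.restrict_restrict measurableSet_Iic]
      congr 1
      ext x
      simp only [mem_inter_iff, mem_Iic, mem_Icc]
      constructor
      · rintro ⟨h1, h2, h3⟩; exact ⟨h2, h1⟩
      · rintro ⟨h1, h2⟩; exact ⟨h2, h1, le_trans h2 ht.2⟩
    have hρIci : ∀ t ∈ Set.Icc (0:ℝ) 1, ρ.restrict (Set.Ici t) = volume.restrict (Set.Icc t 1) := by
      intro t ht
      rw [hρ, Measure.restrict_restrict measurableSet_Ici]
      congr 1
      ext x
      simp only [mem_inter_iff, mem_Ici, mem_Icc]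
      constructor
      · rintro ⟨h1, h2, h3⟩; exact ⟨h1, h3⟩
      · rintro ⟨h1, h2⟩; exact ⟨h1, le_trans ht.1 h1, h2⟩
    -- integrability of indicator products on the product measure
    have intF : ∀ (f g : ℝ → ℝ), Measurable f → Measurable g →
        (∀ x ∈ Set.Icc (0:ℝ) 1, |f x| ≤ 1) → (∀ x ∈ Set.Icc (0:ℝ) 1, |g x| ≤ 1) →
        ∀ (S : Set (ℝ×ℝ)), MeasurableSet S →
        Integrable (S.indicator (fun z => f z.1 * g z.2)) (ρ.prod μ) := by
      intro f g hf hg hbf hbg S hS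
      refine (integrable_const (1:ℝ)).mono'
        ((((hf.comp measurable_fst).mul (hg.comp measurable_snd)).indicator hS).aestronglyMeasurable) ?_
      have h1 : (ρ.prod μ) {z : ℝ×ℝ | ¬ z.1 ∈ Set.Icc (0:ℝ) 1} = 0 := by
        have he : {z : ℝ×ℝ | ¬ z.1 ∈ Set.Icc (0:ℝ) 1} = (Set.Icc (0:ℝ) 1)ᶜ ×ˢ (Set.univ : Set ℝ) := by
          ext z; simp [Set.mem_prod]
        rw [he, Measure.prod_prod]
        have hz : ρ (Set.Icc (0:ℝ) 1)ᶜ = 0 := by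
          rw [hρ, Measure.restrict_apply measurableSet_Icc.compl]
          simp
        rw [hz, zero_mul]
      have h2 : (ρ.prod μ) {z : ℝ×ℝ | ¬ z.2 ∈ Set.Icc (0:ℝ) 1} = 0 := by
        have he : {z : ℝ×ℝ | ¬ z.2 ∈ Set.Icc (0:ℝ) 1} = (Set.univ : Set ℝ) ×ˢ (Set.Icc (0:ℝ) 1)ᶜ := by
          ext z; simp [Set.mem_prod]
        rw [he, Measure.prod_prod, hsupp, mul_zero]
      filter_upwards [(MeasureTheory.ae_iff).mpr h1, (MeasureTheory.ae_iff).mpr h2] with z hz1 hz2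
      calc ‖S.indicator (fun z : ℝ×ℝ => f z.1 * g z.2) z‖ ≤ ‖f z.1 * g z.2‖ :=
            norm_indicator_le_norm_self _ _
        _ ≤ 1 := by
            rw [Real.norm_eq_abs, abs_mul]
            exact mul_le_one₀ (hbf _ hz1) (abs_nonneg _) (hbg _ hz2)
    -- step A
    have stepA : ∀ i : ℕ, i ≤ M →
        (∫ s, q (2*i) s * P (2*(M-i)+1) s ∂ρ) = ∫ t, q (2*i+1) t * P (2*(M-i)) t ∂μ := by
      intro i _
      set b := 2*(M-i) with hb
      set F : ℝ×ℝ → ℝ := ({z : ℝ×ℝ | z.1 ≤ z.2}).indicator (fun z => q (2*i) z.1 * P b z.2) with hF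
      have hqmeas : Measurable (q (2*i)) := (qprop i).1.1
      have hqbd := (qprop i).1.2
      have hPbmeas : Measurable (P b) := hPmeas _ ((pprop (M-i)).1.1)
      have hFint : Integrable F (ρ.prod μ) := by
        refine intF _ _ hqmeas hPbmeas (fun x hx => ?_) (fun x hx => ?_)
          _ (measurableSet_le measurable_fst measurable_snd)
        · rw [abs_le]; exact ⟨by linarith [(hqbd x).1], (hqbd x).2⟩
        · have hx' : (1:ℝ) - x ∈ Set.Icc (0:ℝ) 1 := by
            simp only [mem_Icc] at hx ⊢; constructor <;> linarith [hx.1, hx.2]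
          have := (pprop (M-i)).1.2 (1-x) hx'
          rw [abs_le]; exact ⟨by linarith [this.1], this.2⟩
      have hswap : (∫ s, ∫ t, F (s,t) ∂μ ∂ρ) = ∫ t, ∫ s, F (s,t) ∂ρ ∂μ :=
        MeasureTheory.integral_integral_swap (f := fun s t => F (s,t)) hFint
      have hL : ∀ s : ℝ, (∫ t, F (s,t) ∂μ) = q (2*i) s * P (2*(M-i)+1) s := by
        intro s
        have e : (fun t => F (s,t)) = (Set.Ici s).indicator (fun t => q (2*i) s * P b t) := by
          funext t
          by_cases h : s ≤ t <;>
            simp [hF, Set.indicator_apply, h, Set.mem_Ici]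
        rw [e, integral_indicator measurableSet_Ici, setIntegral_congr_set (haeIci s),
          integral_const_mul, ← hPoddrec (M-i) s]
      have hR : ∀ᵐ t ∂μ, (∫ s, F (s,t) ∂ρ) = q (2*i+1) t * P b t := by
        filter_upwards [ae_mem_Icc' hsupp] with t ht
        have e : (fun s => F (s,t)) = (Set.Iic t).indicator (fun s => q (2*i) s * P b t) := by
          funext s
          by_cases h : s ≤ t <;>
            simp [hF, Set.indicator_apply, h, Set.mem_Iic]
        rw [e, integral_indicator measurableSet_Iic, hρIic t ht, integral_mul_const,
          MeasureTheory.integral_Icc_eq_integral_Ioc,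
          ← intervalIntegral.integral_of_le ht.1, ← hqodd i t]
      calc (∫ s, q (2*i) s * P (2*(M-i)+1) s ∂ρ) = ∫ s, ∫ t, F (s,t) ∂μ ∂ρ := by
            refine integral_congr_ae (Filter.Eventually.of_forall fun s => ?_)
            exact (hL s).symm
        _ = ∫ t, ∫ s, F (s,t) ∂ρ ∂μ := hswap
        _ = ∫ t, q (2*i+1) t * P (2*(M-i)) t ∂μ := integral_congr_ae hR
    -- step B
    have stepB : ∀ i : ℕ, i < M →
        (∫ t, q (2*i+1) t * P (2*(M-i)) t ∂μ) = ∫ s, q (2*(i+1)) s * P (2*(M-(i+1))+1) s ∂ρ := by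
      intro i hi
      have hMi : 2*(M-i) = 2*(M-i-1)+2 := by omega
      have hMi1 : 2*(M-(i+1))+1 = 2*(M-i-1)+1 := by omega
      have h2i2 : 2*(i+1) = 2*i+2 := by ring
      rw [hMi, hMi1, h2i2]
      set n' := M - i - 1 with hn'
      set F : ℝ×ℝ → ℝ := ({z : ℝ×ℝ | z.2 ≤ z.1}).indicator
        (fun z => P (2*n'+1) z.1 * q (2*i+1) z.2) with hF
      have hPmeas' : Measurable (P (2*n'+1)) := hPmeas _ ((pprop n').2.1)
      have hqmeas : Measurable (q (2*i+1)) := (qprop i).2.1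
      have hqbd := (qprop i).2.2
      have hFint : Integrable F (ρ.prod μ) := by
        refine intF _ _ hPmeas' hqmeas (fun x hx => ?_) (fun x hx => ?_)
          _ (measurableSet_le measurable_snd measurable_fst)
        · have := (pprop n').2.2 (1-x)
          rw [abs_le]; exact ⟨by linarith [this.1], this.2⟩
        · rw [abs_le]; exact ⟨by linarith [(hqbd x hx).1], (hqbd x hx).2⟩
      have hswap : (∫ s, ∫ t, F (s,t) ∂μ ∂ρ) = ∫ t, ∫ s, F (s,t) ∂ρ ∂μ :=
        MeasureTheory.integral_integral_swap (f := fun s t => F (s,t)) hFint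
      have hL : ∀ s : ℝ, (∫ t, F (s,t) ∂μ) = P (2*n'+1) s * q (2*i+2) s := by
        intro s
        have e : (fun t => F (s,t)) = (Set.Iic s).indicator (fun t => P (2*n'+1) s * q (2*i+1) t) := by
          funext t
          by_cases h : t ≤ s <;>
            simp [hF, Set.indicator_apply, h, Set.mem_Iic]
        rw [e, integral_indicator measurableSet_Iic, setIntegral_congr_set (haeIic s),
          integral_const_mul, ← hqeven i s]
      have hR : ∀ᵐ t ∂μ, (∫ s, F (s,t) ∂ρ) = P (2*n'+2) t * q (2*i+1) t := by
        filter_upwards [ae_mem_Icc' hsupp] with t ht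
        have e : (fun s => F (s,t)) = (Set.Ici t).indicator (fun s => P (2*n'+1) s * q (2*i+1) t) := by
          funext s
          by_cases h : t ≤ s <;>
            simp [hF, Set.indicator_apply, h, Set.mem_Ici]
        rw [e, integral_indicator measurableSet_Ici, hρIci t ht, integral_mul_const,
          MeasureTheory.integral_Icc_eq_integral_Ioc,
          ← intervalIntegral.integral_of_le ht.2, ← hPevenrec n' t]
      calc (∫ t, q (2*i+1) t * P (2*n'+2) t ∂μ) = ∫ t, ∫ s, F (s,t) ∂ρ ∂μ := by
            refine integral_congr_ae ?_
            filter_upwards [hR] with t h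
            rw [h, mul_comm]
        _ = ∫ s, ∫ t, F (s,t) ∂μ ∂ρ := hswap.symm
        _ = ∫ s, q (2*i+2) s * P (2*n'+1) s ∂ρ := by
            refine integral_congr_ae (Filter.Eventually.of_forall fun s => ?_)
            exact (hL s).trans (mul_comm _ _)
    -- endpoints
    have hJ0 : (∫ s, q (2*0) s * P (2*(M-0)+1) s ∂ρ) = p (2*M+2) 1 := by
      have e : ∀ s : ℝ, q (2*0) s * P (2*(M-0)+1) s = P (2*M+1) s := by
        intro s
        have h0 : (2*0 : ℕ) = 0 := by norm_num
        have hM0 : M - 0 = M := Nat.sub_zero M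
        rw [h0, hM0, hq0, one_mul]
      calc (∫ s, q (2*0) s * P (2*(M-0)+1) s ∂ρ) = ∫ s, P (2*M+1) s ∂ρ :=
            integral_congr_ae (Filter.Eventually.of_forall fun s => e s)
        _ = ∫ s in Set.Icc (0:ℝ) 1, P (2*M+1) s := by rw [hρ]
        _ = ∫ s in Set.Ioc (0:ℝ) 1, P (2*M+1) s := MeasureTheory.integral_Icc_eq_integral_Ioc
        _ = ∫ s in (0:ℝ)..1, P (2*M+1) s := (intervalIntegral.integral_of_le (by norm_num)).symm
        _ = P (2*M+2) 0 := (hPevenrec M 0).symm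
        _ = p (2*M+2) 1 := by simp [hP]
    have hKM : (∫ t, q (2*M+1) t * P (2*(M-M)) t ∂μ) = q (2*M+2) 1 := by
      have e : ∀ t : ℝ, q (2*M+1) t * P (2*(M-M)) t = q (2*M+1) t := by
        intro t
        have hMM : 2*(M - M) = 0 := by omega
        rw [hMM]
        show q (2*M+1) t * p 0 (1-t) = q (2*M+1) t
        rw [hp0, mul_one]
      calc (∫ t, q (2*M+1) t * P (2*(M-M)) t ∂μ) = ∫ t, q (2*M+1) t ∂μ :=
            integral_congr_ae (Filter.Eventually.of_forall fun t => e t)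
        _ = ∫ t in Set.Icc (0:ℝ) 1, q (2*M+1) t ∂μ := by rw [hμr]
        _ = q (2*M+2) 1 := (hqeven M 1).symm
    -- the chain
    have hchain : ∀ i : ℕ, i ≤ M →
        (∫ s, q (2*i) s * P (2*(M-i)+1) s ∂ρ) = p (2*M+2) 1 := by
      intro i
      induction i with
      | zero => intro _; exact hJ0
      | succ i ih =>
        intro h
        rw [← stepB i (by omega), ← stepA i (by omega)]
        exact ih (by omega)
    calc p (2*M+2) 1 = ∫ s, q (2*M) s * P (2*(M-M)+1) s ∂ρ := (hchain M le_rfl).symm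
      _ = ∫ t, q (2*M+1) t * P (2*(M-M)) t ∂μ := stepA M le_rfl
      _ = q (2*M+2) 1 := hKM

theorem stmt_8
    (μ : Measure ℝ) [IsProbabilityMeasure μ] [NullSingletonClass μ]
    (hsupp : μ (Set.Icc (0:ℝ) 1)ᶜ = 0)
    (p q : ℕ → ℝ → ℝ)
    (hp0 : ∀ x : ℝ, p 0 x = 1) (hq0 : ∀ x : ℝ, q 0 x = 1)
    (hpodd : ∀ (n : ℕ) (x : ℝ), p (2*n+1) x = ∫ t in Set.Icc (0:ℝ) x, p (2*n) t ∂μ)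
    (hpeven : ∀ (n : ℕ) (x : ℝ), p (2*n+2) x = ∫ t in (0:ℝ)..x, p (2*n+1) t)
    (hqodd : ∀ (n : ℕ) (x : ℝ), q (2*n+1) x = ∫ t in (0:ℝ)..x, q (2*n) t)
    (hqeven : ∀ (n : ℕ) (x : ℝ), q (2*n+2) x = ∫ t in Set.Icc (0:ℝ) x, q (2*n+1) t ∂μ)
    (hsym : ∀ x ∈ Set.Icc (0:ℝ) 1, μ (Set.Icc (0:ℝ) x) = μ (Set.Icc (1-x) 1)) :
    ∀ n : ℕ, 1 ≤ n →
      ∑ k ∈ Finset.range (n+1), p (2*k) 1 * p (2*n-2*k+1) 1 =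
      ∑ k ∈ Finset.range (n+1), p (2*k+1) 1 * q (2*n-2*k) 1 := by
  intro n _
  have core := core_pq μ hsupp p q hp0 hq0 hpodd hpeven hqodd hqeven hsym
  rw [← Finset.sum_range_reflect (fun k => p (2*k) 1 * p (2*n-2*k+1) 1) (n+1)]
  refine Finset.sum_congr rfl fun k hk => ?_
  have hk' : k ≤ n := Nat.lt_succ_iff.mp (Finset.mem_range.mp hk)
  show p (2*(n+1-1-k)) 1 * p (2*n-2*(n+1-1-k)+1) 1 = p (2*k+1) 1 * q (2*n-2*k) 1
  have e1 : 2*(n+1-1-k) = 2*(n-k) := by omega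
  have e2 : 2*n-2*(n+1-1-k)+1 = 2*k+1 := by omega
  have e3 : 2*n-2*k = 2*(n-k) := by omega
  rw [e2, e1, e3, core (n-k), mul_comm]
end

section
/- Let F : [0,1] → ℝ and let f be a μ-integrable function such that F(x) = F(0) + ∫_{[0,x]} f dμ for all x ∈ [0,1]. Then for all x ∈ [0,1]: F(r₁x) = F(0) + m₁ ∫_{[0,x]} f(r₁t) dμ(t), and F(1−r₂+r₂x) = F(1−r₂) + m₂ ∫_{[0,x]} f(1−r₂+r₂t) dμ(t). -/
open MeasureTheory

theorem stmt_12
    (μ : Measure ℝ) [IsProbabilityMeasure μ] [NullSingletonClass μ]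
    (hsupp : μ (Set.Icc (0:ℝ) 1)ᶜ = 0)
    (r₁ r₂ m₁ m₂ : ℝ)
    (hr₁ : 0 < r₁) (hr₂ : 0 < r₂) (hm₁ : 0 < m₁) (hm₂ : 0 < m₂)
    (hrsum : r₁ + r₂ ≤ 1) (hmsum : m₁ + m₂ = 1)
    (hss : μ = ENNReal.ofReal m₁ • Measure.map (fun x => r₁ * x) μ
           + ENNReal.ofReal m₂ • Measure.map (fun x => r₂ * x + 1 - r₂) μ)
    (F f : ℝ → ℝ) (hf : Integrable f μ)
    (hF : ∀ x ∈ Set.Icc (0:ℝ) 1, F x = F 0 + ∫ t in Set.Icc (0:ℝ) x, f t ∂μ) :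
    ∀ x ∈ Set.Icc (0:ℝ) 1,
      F (r₁ * x) = F 0 + m₁ * ∫ t in Set.Icc (0:ℝ) x, f (r₁ * t) ∂μ ∧
      F (1 - r₂ + r₂ * x) = F (1 - r₂) + m₂ * ∫ t in Set.Icc (0:ℝ) x, f (1 - r₂ + r₂ * t) ∂μ := by
  have hr₂1 : r₂ ≤ 1 := by linarith
  have hr₁r₂ : r₁ ≤ 1 - r₂ := by linarith
  have hS₁ : MeasurableEmbedding (fun x : ℝ => r₁ * x) :=
    (Homeomorph.mulLeft₀ r₁ hr₁.ne').measurableEmbedding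
  have hS₂ : MeasurableEmbedding (fun x : ℝ => r₂ * x + 1 - r₂) := by
    have h : (fun x : ℝ => r₂ * x + 1 - r₂) = fun x : ℝ => r₂ * x + (1 - r₂) := by
      ext x; ring
    rw [h]
    exact ((Homeomorph.mulLeft₀ r₂ hr₂.ne').trans
      (Homeomorph.addRight (1 - r₂))).measurableEmbedding
  -- measure of left tail is zero
  have hIic : ∀ c : ℝ, c ≤ 0 → μ (Set.Iic c) = 0 := by
    intro c hc
    have h1 : μ (Set.Iio 0) = 0 := by
      refine measure_mono_null (fun y hy => ?_) hsupp
      simp only [Set.mem_compl_iff, Set.mem_Icc, not_and_or, not_le]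
      exact Or.inl hy
    have h2 : μ (Set.Iio 0 ∪ {0}) = 0 := measure_union_null h1 (measure_singleton 0)
    refine measure_mono_null (fun y hy => ?_) h2
    rcases lt_or_eq_of_le (le_trans hy hc) with h | h
    · exact Or.inl h
    · exact Or.inr (by simp [h])
  have hIoi : μ (Set.Ioi 1) = 0 := by
    refine measure_mono_null (fun y hy => ?_) hsupp
    simp only [Set.mem_compl_iff, Set.mem_Icc, not_and_or, not_le]
    exact Or.inr hy
  intro x hx
  obtain ⟨hx0, hx1⟩ := hx
  constructor
  · -- first part
    have hmem : r₁ * x ∈ Set.Icc (0:ℝ) 1 :=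
      ⟨by positivity, by nlinarith⟩
    rw [hF _ hmem]
    have key : ∫ t in Set.Icc (0:ℝ) (r₁ * x), f t ∂μ
        = m₁ * ∫ t in Set.Icc (0:ℝ) x, f (r₁ * t) ∂μ := by
      set A := Set.Icc (0:ℝ) (r₁ * x) with hA
      have hrw : μ.restrict A
          = (ENNReal.ofReal m₁ • Measure.map (fun x => r₁ * x) μ).restrict A
            + (ENNReal.ofReal m₂ • Measure.map (fun x => r₂ * x + 1 - r₂) μ).restrict A := by
        conv_lhs => rw [hss]
        rw [Measure.restrict_add]
      have hint : Integrable f (μ.restrict A) := hf.restrict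
      rw [hrw] at hint
      rw [show (∫ t in A, f t ∂μ) = ∫ t, f t ∂(μ.restrict A) from rfl, hrw,
        integral_add_measure (integrable_add_measure.mp hint).1
          (integrable_add_measure.mp hint).2]
      -- second piece vanishes
      have hz : ((ENNReal.ofReal m₂ • Measure.map (fun x => r₂ * x + 1 - r₂) μ).restrict A) = 0 := by
        rw [Measure.restrict_eq_zero]
        have hmap : Measure.map (fun x => r₂ * x + 1 - r₂) μ A = 0 := by
          rw [Measure.map_apply hS₂.measurable measurableSet_Icc]
          refine measure_mono_null (fun t ht => ?_) (hIic ((r₁ * x - (1 - r₂)) / r₂)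
            (by
              have : r₁ * x ≤ 1 - r₂ := by nlinarith
              exact div_nonpos_of_nonpos_of_nonneg (by linarith) hr₂.le))
          simp only [Set.mem_preimage, Set.mem_Icc] at ht
          have : t ≤ (r₁ * x - (1 - r₂)) / r₂ := by
            rw [le_div_iff₀ hr₂]
            nlinarith [ht.2]
          exact this
        simp [Measure.smul_apply, hmap]
      rw [hz, integral_zero_measure, add_zero, Measure.restrict_smul,
        integral_smul_measure, ENNReal.toReal_ofReal hm₁.le, smul_eq_mul]
      congr 1
      rw [hS₁.setIntegral_map]
      have hpre : (fun x : ℝ => r₁ * x) ⁻¹' A = Set.Icc 0 x := by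
        ext t
        simp only [Set.mem_preimage, hA, Set.mem_Icc]
        constructor
        · rintro ⟨h1, h2⟩
          exact ⟨nonneg_of_mul_nonneg_right h1 hr₁, le_of_mul_le_mul_left h2 hr₁⟩
        · rintro ⟨h1, h2⟩
          exact ⟨by positivity, by nlinarith⟩
      rw [hpre]
    rw [key]
  · -- second part
    set a := 1 - r₂ with ha
    set b := 1 - r₂ + r₂ * x with hb
    have h0a : (0:ℝ) ≤ a := by simp [ha]; linarith
    have hab : a ≤ b := le_add_of_nonneg_right (by positivity)
    have hb1 : b ≤ 1 := by simp [ha, hb]; nlinarith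
    have hmemb : b ∈ Set.Icc (0:ℝ) 1 := ⟨le_trans h0a hab, hb1⟩
    have hmema : a ∈ Set.Icc (0:ℝ) 1 := ⟨h0a, by simp [ha]; linarith⟩
    rw [hF _ hmemb, hF _ hmema]
    have hsplit : ∫ t in Set.Icc (0:ℝ) b, f t ∂μ
        = (∫ t in Set.Icc (0:ℝ) a, f t ∂μ) + ∫ t in Set.Ioc a b, f t ∂μ := by
      rw [← Set.Icc_union_Ioc_eq_Icc h0a hab]
      refine setIntegral_union ?_ measurableSet_Ioc hf.integrableOn hf.integrableOn
      rw [Set.disjoint_left]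
      intro y hy hy'
      exact absurd hy.2 (not_le.mpr hy'.1)
    rw [hsplit]
    have key : ∫ t in Set.Ioc a b, f t ∂μ
        = m₂ * ∫ t in Set.Icc (0:ℝ) x, f (1 - r₂ + r₂ * t) ∂μ := by
      set A := Set.Ioc a b with hA
      have hrw : μ.restrict A
          = (ENNReal.ofReal m₁ • Measure.map (fun x => r₁ * x) μ).restrict A
            + (ENNReal.ofReal m₂ • Measure.map (fun x => r₂ * x + 1 - r₂) μ).restrict A := by
        conv_lhs => rw [hss]
        rw [Measure.restrict_add]
      have hint : Integrable f (μ.restrict A) := hf.restrict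
      rw [hrw] at hint
      rw [show (∫ t in A, f t ∂μ) = ∫ t, f t ∂(μ.restrict A) from rfl, hrw,
        integral_add_measure (integrable_add_measure.mp hint).1
          (integrable_add_measure.mp hint).2]
      -- first piece vanishes
      have hz : ((ENNReal.ofReal m₁ • Measure.map (fun x => r₁ * x) μ).restrict A) = 0 := by
        rw [Measure.restrict_eq_zero]
        have hmap : Measure.map (fun x => r₁ * x) μ A = 0 := by
          rw [Measure.map_apply hS₁.measurable measurableSet_Ioc]
          refine measure_mono_null (fun t ht => ?_) hIoi
          simp only [Set.mem_preimage, Set.mem_Ioc] at ht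
          have : r₁ * 1 < r₁ * t := by
            calc r₁ * 1 = r₁ := by ring
            _ ≤ a := hr₁r₂
            _ < r₁ * t := ht.1
          exact lt_of_mul_lt_mul_left this hr₁.le
        simp [Measure.smul_apply, hmap]
      rw [hz, integral_zero_measure, zero_add, Measure.restrict_smul,
        integral_smul_measure, ENNReal.toReal_ofReal hm₂.le, smul_eq_mul]
      congr 1
      rw [hS₂.setIntegral_map]
      have hpre : (fun x : ℝ => r₂ * x + 1 - r₂) ⁻¹' A = Set.Ioc 0 x := by
        ext t
        simp only [Set.mem_preimage, hA, Set.mem_Ioc, ha, hb]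
        constructor
        · rintro ⟨h1, h2⟩
          constructor
          · nlinarith
          · nlinarith
        · rintro ⟨h1, h2⟩
          constructor
          · nlinarith
          · nlinarith
      rw [hpre, ← MeasureTheory.integral_Icc_eq_integral_Ioc]
      have hfun : (fun t => f (r₂ * t + 1 - r₂)) = fun t => f (1 - r₂ + r₂ * t) := by
        ext t; congr 1; ring
      rw [hfun]
    rw [key]
    ring
end

section
/- For all x ∈ [0,1]: (i) for every n ∈ ℕ₀, p_{2n+1}(1−r₂+r₂x) = Σ_{i=0}^n p_{2i+1}(r₁)·((r₂m₂)/(r₁m₁))^{n−i}·q_{2n−2i}(r₁x) + Σ_{i=0}^n p_{2i}(r₁)·(r₂/r₁)^{n−i}·(m₂/m₁)^{n−i+1}·p_{2n−2i+1}(r₁x) + (1−(r₁+r₂))·Σ_{i=0}^{n−1} p_{2i+1}(r₁)·(r₂/r₁)^{n−i−1}·(m₂/m₁)^{n−i}·p_{2n−2i−1}(r₁x); (ii) for every n ∈ ℕ with n ≥ 1, p_{2n}(1−r₂+r₂x) = Σ_{i=0}^n p_{2i}(r₁)·((r₂m₂)/(r₁m₁))^{n−i}·p_{2n−2i}(r₁x)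 + Σ_{i=0}^{n−1} p_{2i+1}(r₁)·(r₂/r₁)^{n−i}·(m₂/m₁)^{n−i−1}·q_{2n−2i−1}(r₁x) + (1−(r₁+r₂))·Σ_{i=0}^{n−1} p_{2i+1}(r₁)·((r₂m₂)/(r₁m₁))^{n−i−1}·p_{2n−2i−2}(r₁x). A sum over an empty index range is 0. -/
open MeasureTheory

set_option maxHeartbeats 1000000 in
theorem stmt_13
    (μ : Measure ℝ) [IsProbabilityMeasure μ] [NullSingletonClass μ]
    (hsupp : μ (Set.Icc (0:ℝ) 1)ᶜ = 0)
    (r₁ r₂ m₁ m₂ : ℝ)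
    (hr₁ : 0 < r₁) (hr₂ : 0 < r₂) (hm₁ : 0 < m₁) (hm₂ : 0 < m₂)
    (hrsum : r₁ + r₂ ≤ 1) (hmsum : m₁ + m₂ = 1)
    (hss : μ = ENNReal.ofReal m₁ • Measure.map (fun x => r₁ * x) μ
           + ENNReal.ofReal m₂ • Measure.map (fun x => r₂ * x + 1 - r₂) μ)
    (p q : ℕ → ℝ → ℝ)
    (hp0 : ∀ x : ℝ, p 0 x = 1) (hq0 : ∀ x : ℝ, q 0 x = 1)
    (hpodd : ∀ (n : ℕ) (x : ℝ), p (2*n+1) x = ∫ t in Set.Icc (0:ℝ) x, p (2*n) t ∂μ)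
    (hpeven : ∀ (n : ℕ) (x : ℝ), p (2*n+2) x = ∫ t in (0:ℝ)..x, p (2*n+1) t)
    (hqodd : ∀ (n : ℕ) (x : ℝ), q (2*n+1) x = ∫ t in (0:ℝ)..x, q (2*n) t)
    (hqeven : ∀ (n : ℕ) (x : ℝ), q (2*n+2) x = ∫ t in Set.Icc (0:ℝ) x, q (2*n+1) t ∂μ) :
    ∀ x ∈ Set.Icc (0:ℝ) 1,
      (∀ n : ℕ,
        p (2*n+1) (1 - r₂ + r₂*x) =
          (∑ i ∈ Finset.range (n+1),
            p (2*i+1) r₁ * ((r₂*m₂)/(r₁*m₁))^(n-i) * q (2*n-2*i) (r₁*x))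
          + (∑ i ∈ Finset.range (n+1),
            p (2*i) r₁ * (r₂/r₁)^(n-i) * (m₂/m₁)^(n-i+1) * p (2*n-2*i+1) (r₁*x))
          + (1-(r₁+r₂)) * ∑ i ∈ Finset.range n,
            p (2*i+1) r₁ * (r₂/r₁)^(n-i-1) * (m₂/m₁)^(n-i) * p (2*n-2*i-1) (r₁*x)) ∧
      (∀ n : ℕ, 1 ≤ n →
        p (2*n) (1 - r₂ + r₂*x) =
          (∑ i ∈ Finset.range (n+1),
            p (2*i) r₁ * ((r₂*m₂)/(r₁*m₁))^(n-i) * p (2*n-2*i) (r₁*x))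
          + (∑ i ∈ Finset.range n,
            p (2*i+1) r₁ * (r₂/r₁)^(n-i) * (m₂/m₁)^(n-i-1) * q (2*n-2*i-1) (r₁*x))
          + (1-(r₁+r₂)) * ∑ i ∈ Finset.range n,
            p (2*i+1) r₁ * ((r₂*m₂)/(r₁*m₁))^(n-i-1) * p (2*n-2*i-2) (r₁*x)) := by
  have hr₁0 : r₁ ≠ 0 := ne_of_gt hr₁
  have hr₂0 : r₂ ≠ 0 := ne_of_gt hr₂
  have hm₁0 : m₁ ≠ 0 := ne_of_gt hm₁
  have hr₁1 : r₁ ≤ 1 - r₂ := by linarith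
  -- a.e. membership in Ioo 0 1
  have hae : ∀ᵐ t ∂μ, t ∈ Set.Ioo (0:ℝ) 1 := by
    have hsub : (Set.Ioo (0:ℝ) 1)ᶜ ⊆ ((Set.Icc (0:ℝ) 1)ᶜ ∪ {0}) ∪ {1} := by
      intro t ht
      by_cases h : t ∈ Set.Icc (0:ℝ) 1
      · rcases eq_or_lt_of_le h.1 with h0 | h0
        · exact Or.inl (Or.inr (by simp [← h0]))
        · rcases eq_or_lt_of_le h.2 with h1 | h1
          · exact Or.inr (by simp [h1])
          · exact absurd ⟨h0, h1⟩ ht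
      · exact Or.inl (Or.inl h)
    have hU : μ (((Set.Icc (0:ℝ) 1)ᶜ ∪ {0}) ∪ {1}) = 0 :=
      measure_union_null (measure_union_null hsupp (measure_singleton _)) (measure_singleton _)
    rw [Filter.eventually_iff, mem_ae_iff]
    exact measure_mono_null hsub hU
  have hfull : μ.restrict (Set.Icc (0:ℝ) 1) = μ :=
    Measure.restrict_eq_self_of_ae_mem (hae.mono fun t ht => ⟨ht.1.le, ht.2.le⟩)
  -- integrability helpers
  have hInt : ∀ f : ℝ → ℝ, Monotone f → ∀ x : ℝ, IntegrableOn f (Set.Icc 0 x) μ := by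
    intro f hf x
    exact (hf.monotoneOn _).integrableOn_isCompact isCompact_Icc
  have hmeas1 : Measurable fun t : ℝ => r₁ * t := measurable_id.const_mul r₁
  have hmeas2 : Measurable fun t : ℝ => r₂ * t + 1 - r₂ :=
    ((measurable_id.const_mul r₂).add_const 1).sub_const r₂
  -- master change of variables
  have hCV : ∀ f : ℝ → ℝ, Monotone f → ∀ y : ℝ,
      ∫ t in Set.Icc (0:ℝ) y, f t ∂μ
        = m₁ * ∫ t, (Set.Icc (0:ℝ) y).indicator f (r₁ * t) ∂μ
          + m₂ * ∫ t, (Set.Icc (0:ℝ) y).indicator f (r₂ * t + 1 - r₂) ∂μ := by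
    intro f hf y
    set g := (Set.Icc (0:ℝ) y).indicator f with hg
    have hgm : Measurable g := hf.measurable.indicator measurableSet_Icc
    have hgb : ∀ u : ℝ, ‖g u‖ ≤ ‖f 0‖ + ‖f y‖ := by
      intro u
      rw [hg, Real.norm_eq_abs, Real.norm_eq_abs, Real.norm_eq_abs]
      by_cases hu : u ∈ Set.Icc (0:ℝ) y
      · rw [Set.indicator_of_mem hu]
        exact (abs_le_max_abs_abs (hf hu.1) (hf hu.2)).trans
          (max_le (le_add_of_nonneg_right (abs_nonneg _)) (le_add_of_nonneg_left (abs_nonneg _)))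
      · rw [Set.indicator_of_notMem hu, abs_zero]
        positivity
    have hint : ∀ φ : ℝ → ℝ, Measurable φ → Integrable (g ∘ φ) μ := by
      intro φ hφ
      exact (integrable_const (‖f 0‖ + ‖f y‖)).mono'
        ((hgm.comp hφ).aestronglyMeasurable)
        (Filter.Eventually.of_forall fun t => hgb (φ t))
    have hone : (ENNReal.ofReal m₁) ≠ 0 := by
      simp [ENNReal.ofReal_eq_zero]; linarith
    have htwo : (ENNReal.ofReal m₂) ≠ 0 := by
      simp [ENNReal.ofReal_eq_zero]; linarith
    have hint1 : Integrable g (ENNReal.ofReal m₁ • Measure.map (fun x => r₁ * x) μ) := by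
      rw [integrable_smul_measure hone ENNReal.ofReal_ne_top,
        integrable_map_measure hgm.aestronglyMeasurable hmeas1.aemeasurable]
      exact hint _ hmeas1
    have hint2 : Integrable g (ENNReal.ofReal m₂ • Measure.map (fun x => r₂ * x + 1 - r₂) μ) := by
      rw [integrable_smul_measure htwo ENNReal.ofReal_ne_top,
        integrable_map_measure hgm.aestronglyMeasurable hmeas2.aemeasurable]
      exact hint _ hmeas2
    have h1 : ∫ t in Set.Icc (0:ℝ) y, f t ∂μ = ∫ t, g t ∂μ :=
      (integral_indicator measurableSet_Icc).symm
    rw [h1]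
    conv_lhs => rw [hss]
    rw [integral_add_measure hint1 hint2, integral_smul_measure, integral_smul_measure,
      integral_map hmeas1.aemeasurable hgm.aestronglyMeasurable,
      integral_map hmeas2.aemeasurable hgm.aestronglyMeasurable,
      ENNReal.toReal_ofReal hm₁.le, ENNReal.toReal_ofReal hm₂.le, smul_eq_mul, smul_eq_mul]
  -- specialization 1 : left piece
  have hCV1 : ∀ f : ℝ → ℝ, Monotone f → ∀ x : ℝ, x ∈ Set.Icc (0:ℝ) 1 →
      ∫ t in Set.Icc (0:ℝ) (r₁ * x), f t ∂μ = m₁ * ∫ t in Set.Icc (0:ℝ) x, f (r₁ * t) ∂μ := by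
    intro f hf x hx
    rw [hCV f hf (r₁ * x)]
    have e1 : ∀ t : ℝ, (Set.Icc (0:ℝ) (r₁*x)).indicator f (r₁ * t)
        = (Set.Icc (0:ℝ) x).indicator (fun s => f (r₁ * s)) t := by
      intro t
      by_cases ht : t ∈ Set.Icc (0:ℝ) x
      · rw [Set.indicator_of_mem ht,
          Set.indicator_of_mem (Set.mem_Icc.mpr ⟨by nlinarith [ht.1], by nlinarith [ht.2]⟩)]
      · rw [Set.indicator_of_notMem ht, Set.indicator_of_notMem ?_]
        intro hmem
        exact ht ⟨nonneg_of_mul_nonneg_right hmem.1 hr₁, by nlinarith [hmem.2]⟩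
    have e2 : ∫ t, (Set.Icc (0:ℝ) (r₁*x)).indicator f (r₂ * t + 1 - r₂) ∂μ = 0 := by
      have : ∀ᵐ t ∂μ, (Set.Icc (0:ℝ) (r₁*x)).indicator f (r₂ * t + 1 - r₂) = 0 := by
        filter_upwards [hae] with t ht
        apply Set.indicator_of_notMem
        intro hmem
        have := hmem.2
        nlinarith [ht.1, hx.2]
      rw [integral_congr_ae this, integral_zero]
    rw [e2, mul_zero, add_zero]
    congr 1
    calc ∫ t, (Set.Icc (0:ℝ) (r₁*x)).indicator f (r₁ * t) ∂μ
        = ∫ t, (Set.Icc (0:ℝ) x).indicator (fun s => f (r₁ * s)) t ∂μ := by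
          exact integral_congr_ae (Filter.Eventually.of_forall e1)
      _ = ∫ t in Set.Icc (0:ℝ) x, f (r₁ * t) ∂μ := integral_indicator measurableSet_Icc
  -- specialization 2 : right piece
  have hCV2 : ∀ f : ℝ → ℝ, Monotone f → ∀ x : ℝ, x ∈ Set.Icc (0:ℝ) 1 →
      ∫ t in Set.Icc (0:ℝ) (1 - r₂ + r₂ * x), f t ∂μ
        = (∫ t in Set.Icc (0:ℝ) r₁, f t ∂μ)
          + m₂ * ∫ t in Set.Icc (0:ℝ) x, f (1 - r₂ + r₂ * t) ∂μ := by
    intro f hf x hx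
    rw [hCV f hf (1 - r₂ + r₂ * x)]
    have e1 : ∫ t, (Set.Icc (0:ℝ) (1 - r₂ + r₂*x)).indicator f (r₁ * t) ∂μ
        = ∫ t in Set.Icc (0:ℝ) 1, f (r₁ * t) ∂μ := by
      have h' : ∀ᵐ t ∂μ, (Set.Icc (0:ℝ) (1 - r₂ + r₂*x)).indicator f (r₁ * t)
          = (Set.Icc (0:ℝ) 1).indicator (fun s => f (r₁ * s)) t := by
        filter_upwards [hae] with t ht
        rw [Set.indicator_of_mem (Set.mem_Icc.mpr ⟨by nlinarith [ht.1], by nlinarith [ht.2, hx.1]⟩),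
          Set.indicator_of_mem (Set.mem_Icc.mpr ⟨ht.1.le, ht.2.le⟩)]
      rw [integral_congr_ae h', integral_indicator measurableSet_Icc]
    have e2 : ∫ t, (Set.Icc (0:ℝ) (1 - r₂ + r₂*x)).indicator f (r₂ * t + 1 - r₂) ∂μ
        = ∫ t in Set.Icc (0:ℝ) x, f (1 - r₂ + r₂ * t) ∂μ := by
      have h' : ∀ᵐ t ∂μ, (Set.Icc (0:ℝ) (1 - r₂ + r₂*x)).indicator f (r₂ * t + 1 - r₂)
          = (Set.Icc (0:ℝ) x).indicator (fun s => f (1 - r₂ + r₂ * s)) t := by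
        filter_upwards [hae] with t ht
        have harg : r₂ * t + 1 - r₂ = 1 - r₂ + r₂ * t := by ring
        by_cases htx : t ∈ Set.Icc (0:ℝ) x
        · rw [Set.indicator_of_mem htx,
            Set.indicator_of_mem (Set.mem_Icc.mpr ⟨by nlinarith [ht.1], by nlinarith [htx.2]⟩), harg]
        · rw [Set.indicator_of_notMem htx, Set.indicator_of_notMem ?_]
          intro hmem
          exact htx ⟨ht.1.le, by nlinarith [hmem.2]⟩
      rw [integral_congr_ae h', integral_indicator measurableSet_Icc]
    have e3 : m₁ * ∫ t in Set.Icc (0:ℝ) 1, f (r₁ * t) ∂μ = ∫ t in Set.Icc (0:ℝ) r₁, f t ∂μ := by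
      have := hCV1 f hf 1 (by constructor <;> norm_num)
      rw [mul_one] at this
      exact this.symm
    rw [e1, e2, e3]
  -- monotonicity / nonnegativity machinery
  have hp_odd_zero : ∀ k : ℕ, ∀ x : ℝ, x ≤ 0 → p (2*k+1) x = 0 := by
    intro k x hx
    rw [hpodd]
    rcases lt_or_eq_of_le hx with h | h
    · rw [Set.Icc_eq_empty (not_le.mpr h), Measure.restrict_empty, integral_zero_measure]
    · rw [h, Set.Icc_self, Measure.restrict_eq_zero.mpr (measure_singleton _),
        integral_zero_measure]
  have hstep_podd : ∀ k : ℕ, Monotone (p (2*k)) → (∀ x, 0 ≤ p (2*k) x) →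
      Monotone (p (2*k+1)) ∧ (∀ x, 0 ≤ p (2*k+1) x) := by
    intro k hm hn
    constructor
    · intro a b hab
      rw [hpodd, hpodd]
      exact setIntegral_mono_set (hInt _ hm b) (Filter.Eventually.of_forall fun t => hn t)
        (HasSubset.Subset.eventuallyLE (Set.Icc_subset_Icc_right hab))
    · intro x
      rw [hpodd]
      exact setIntegral_nonneg measurableSet_Icc fun t _ => hn t
  have hstep_peven : ∀ k : ℕ, Monotone (p (2*k+1)) → (∀ x, 0 ≤ p (2*k+1) x) →
      Monotone (p (2*k+2)) ∧ (∀ x, 0 ≤ p (2*k+2) x) := by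
    intro k hm hn
    have hzero : ∀ x : ℝ, x ≤ 0 → p (2*k+2) x = 0 := by
      intro x hx
      rw [hpeven]
      have hE0 : Set.EqOn (p (2*k+1)) (fun _ => 0) (Set.uIcc 0 x) := by
        intro t ht
        rw [Set.uIcc_of_ge hx] at ht
        exact hp_odd_zero k t ht.2
      rw [intervalIntegral.integral_congr hE0]
      simp
    constructor
    · intro a b hab
      rw [hpeven, hpeven, ← sub_nonneg,
        intervalIntegral.integral_interval_sub_left hm.intervalIntegrable hm.intervalIntegrable]
      exact intervalIntegral.integral_nonneg hab fun u _ => hn u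
    · intro x
      rcases le_or_gt x 0 with h | h
      · rw [hzero x h]
      · rw [hpeven]
        exact intervalIntegral.integral_nonneg h.le fun u _ => hn u
  have hstep_qodd : ∀ k : ℕ, Monotone (q (2*k)) → (∀ x, 0 ≤ q (2*k) x) →
      Monotone (q (2*k+1)) ∧ (∀ x, 0 ≤ x → 0 ≤ q (2*k+1) x) := by
    intro k hm hn
    constructor
    · intro a b hab
      rw [hqodd, hqodd, ← sub_nonneg,
        intervalIntegral.integral_interval_sub_left hm.intervalIntegrable hm.intervalIntegrable]
      exact intervalIntegral.integral_nonneg hab fun u _ => hn u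
    · intro x hx
      rw [hqodd]
      exact intervalIntegral.integral_nonneg hx fun u _ => hn u
  have hstep_qeven : ∀ k : ℕ, Monotone (q (2*k+1)) → (∀ x, 0 ≤ x → 0 ≤ q (2*k+1) x) →
      Monotone (q (2*k+2)) ∧ (∀ x, 0 ≤ q (2*k+2) x) := by
    intro k hm hn
    constructor
    · intro a b hab
      rw [hqeven, hqeven]
      refine setIntegral_mono_set (hInt _ hm b) ?_
        (HasSubset.Subset.eventuallyLE (Set.Icc_subset_Icc_right hab))
      filter_upwards [ae_restrict_mem measurableSet_Icc] with t ht using hn t ht.1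
    · intro x
      rw [hqeven]
      exact setIntegral_nonneg measurableSet_Icc fun t ht => hn t ht.1
  have hPQ : ∀ n : ℕ, (Monotone (p (2*n)) ∧ (∀ x, 0 ≤ p (2*n) x))
      ∧ (Monotone (q (2*n)) ∧ (∀ x, 0 ≤ q (2*n) x)) := by
    intro n
    induction n with
    | zero =>
      simp only [Nat.mul_zero]
      refine ⟨⟨fun a b _ => by rw [hp0, hp0], fun x => by rw [hp0]; norm_num⟩,
        ⟨fun a b _ => by rw [hq0, hq0], fun x => by rw [hq0]; norm_num⟩⟩
    | succ k ih =>
      have h1 := hstep_podd k ih.1.1 ih.1.2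
      have h2 := hstep_peven k h1.1 h1.2
      have h3 := hstep_qodd k ih.2.1 ih.2.2
      have h4 := hstep_qeven k h3.1 h3.2
      rw [show 2*(k+1) = 2*k+2 by ring]
      exact ⟨h2, h4⟩
  have hpm : ∀ k : ℕ, Monotone (p k) := by
    intro k
    obtain ⟨m, rfl | rfl⟩ := Nat.even_or_odd' k
    · exact (hPQ m).1.1
    · exact (hstep_podd m (hPQ m).1.1 (hPQ m).1.2).1
  have hqm : ∀ k : ℕ, Monotone (q k) := by
    intro k
    obtain ⟨m, rfl | rfl⟩ := Nat.even_or_odd' k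
    · exact (hPQ m).2.1
    · exact (hstep_qodd m (hPQ m).2.1 (hPQ m).2.2).1
  -- Lebesgue substitutions
  have hL1 : ∀ f : ℝ → ℝ, ∀ x : ℝ,
      r₁ * ∫ u in (0:ℝ)..x, f (r₁ * u) = ∫ t in (0:ℝ)..(r₁*x), f t := by
    intro f x
    rw [intervalIntegral.integral_comp_mul_left f hr₁0, mul_zero, smul_eq_mul,
      ← mul_assoc, mul_inv_cancel₀ hr₁0, one_mul]
  have hL2 : ∀ f : ℝ → ℝ, ∀ x : ℝ,
      r₂ * ∫ u in (0:ℝ)..x, f (1 - r₂ + r₂ * u) = ∫ t in (1-r₂)..(1 - r₂ + r₂*x), f t := by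
    intro f x
    rw [intervalIntegral.integral_comp_add_mul f hr₂0 (1-r₂),
      show (1:ℝ) - r₂ + r₂*0 = 1 - r₂ by ring, smul_eq_mul,
      ← mul_assoc, mul_inv_cancel₀ hr₂0, one_mul]
  -- recursion lemmas
  have R1 : ∀ k : ℕ, ∀ x ∈ Set.Icc (0:ℝ) 1,
      p (2*k+1) (r₁*x) = m₁ * ∫ t in Set.Icc (0:ℝ) x, p (2*k) (r₁*t) ∂μ := by
    intro k x hx
    rw [hpodd]
    exact hCV1 _ (hpm _) x hx
  have R2 : ∀ k : ℕ, ∀ x ∈ Set.Icc (0:ℝ) 1,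
      p (2*k+1) (1 - r₂ + r₂*x)
        = p (2*k+1) r₁ + m₂ * ∫ t in Set.Icc (0:ℝ) x, p (2*k) (1 - r₂ + r₂*t) ∂μ := by
    intro k x hx
    rw [hpodd, hCV2 _ (hpm _) x hx, ← hpodd]
  have R3 : ∀ k : ℕ, ∀ x ∈ Set.Icc (0:ℝ) 1,
      q (2*k+2) (r₁*x) = m₁ * ∫ t in Set.Icc (0:ℝ) x, q (2*k+1) (r₁*t) ∂μ := by
    intro k x hx
    rw [hqeven]
    exact hCV1 _ (hqm _) x hx
  have R4 : ∀ k : ℕ, ∀ x : ℝ,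
      p (2*k+2) (r₁*x) = r₁ * ∫ u in (0:ℝ)..x, p (2*k+1) (r₁*u) := by
    intro k x; rw [hpeven, hL1]
  have R5 : ∀ k : ℕ, ∀ x : ℝ,
      q (2*k+1) (r₁*x) = r₁ * ∫ u in (0:ℝ)..x, q (2*k) (r₁*u) := by
    intro k x; rw [hqodd, hL1]
  have R6 : ∀ k : ℕ, ∀ x : ℝ,
      p (2*k+2) (1 - r₂ + r₂*x)
        = p (2*k+2) r₁ + (1-(r₁+r₂)) * p (2*k+1) r₁
          + r₂ * ∫ u in (0:ℝ)..x, p (2*k+1) (1 - r₂ + r₂*u) := by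
    intro k x
    have hii : ∀ a b : ℝ, IntervalIntegrable (p (2*k+1)) volume a b :=
      fun a b => (hpm _).intervalIntegrable
    have hconst1 : p (2*k+1) (1-r₂) = p (2*k+1) r₁ := by
      have h := R2 k 0 (by constructor <;> norm_num)
      rw [show (1:ℝ) - r₂ + r₂*0 = 1 - r₂ by ring, Set.Icc_self,
        Measure.restrict_eq_zero.mpr (measure_singleton _), integral_zero_measure,
        mul_zero, add_zero] at h
      exact h
    have hconst : ∀ t ∈ Set.Icc r₁ (1-r₂), p (2*k+1) t = p (2*k+1) r₁ := fun t ht =>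
      le_antisymm (hconst1 ▸ hpm _ ht.2) (hpm _ ht.1)
    have e1 : ∫ t in r₁..(1-r₂), p (2*k+1) t = (1 - r₂ - r₁) * p (2*k+1) r₁ := by
      rw [intervalIntegral.integral_congr (g := fun _ => p (2*k+1) r₁)
          (fun t ht => hconst t (by rwa [Set.uIcc_of_le hr₁1] at ht)),
        intervalIntegral.integral_const, smul_eq_mul]
    have e2 := hL2 (p (2*k+1)) x
    have A := intervalIntegral.integral_add_adjacent_intervals (hii 0 r₁) (hii r₁ (1-r₂))
    have B := intervalIntegral.integral_add_adjacent_intervals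
      (hii 0 (1-r₂)) (hii (1-r₂) (1 - r₂ + r₂*x))
    rw [hpeven k (1 - r₂ + r₂*x), ← B, ← A, e1, ← e2, ← hpeven k r₁]
    ring
  -- affine monotonicity
  have haff1 : ∀ f : ℝ → ℝ, Monotone f → Monotone (fun u : ℝ => f (r₁ * u)) := by
    intro f hf a b hab
    exact hf (mul_le_mul_of_nonneg_left hab hr₁.le)
  -- termwise integration helpers
  have hsumL : ∀ (s : Finset ℕ) (c : ℕ → ℝ) (g : ℕ → ℝ → ℝ), (∀ i ∈ s, Monotone (g i)) →
      ∀ x : ℝ, IntervalIntegrable (fun u => ∑ i ∈ s, c i * g i u) volume 0 x ∧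
        (∫ u in (0:ℝ)..x, (∑ i ∈ s, c i * g i u)) = ∑ i ∈ s, c i * ∫ u in (0:ℝ)..x, g i u := by
    intro s c g hg x
    have h1 : ∀ i ∈ s, IntervalIntegrable (fun u => c i * g i u) volume 0 x :=
      fun i hi => ((hg i hi).intervalIntegrable).const_mul _
    constructor
    · have h2 := IntervalIntegrable.sum s h1
      rwa [Finset.sum_fn] at h2
    rw [intervalIntegral.integral_finset_sum h1]
    exact Finset.sum_congr rfl fun i hi => intervalIntegral.integral_const_mul _ _
  have hsumM : ∀ (s : Finset ℕ) (c : ℕ → ℝ) (g : ℕ → ℝ → ℝ), (∀ i ∈ s, Monotone (g i)) →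
      ∀ x : ℝ, Integrable (fun u => ∑ i ∈ s, c i * g i u) (μ.restrict (Set.Icc 0 x)) ∧
        (∫ t in Set.Icc (0:ℝ) x, (∑ i ∈ s, c i * g i t) ∂μ)
          = ∑ i ∈ s, c i * ∫ t in Set.Icc (0:ℝ) x, g i t ∂μ := by
    intro s c g hg x
    have h1 : ∀ i ∈ s, Integrable (fun u => c i * g i u) (μ.restrict (Set.Icc 0 x)) :=
      fun i hi => (hInt _ (hg i hi) x).const_mul _
    refine ⟨integrable_finset_sum s h1, ?_⟩
    rw [integral_finset_sum s h1]
    exact Finset.sum_congr rfl fun i hi => integral_const_mul _ _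
  -- base case
  have base : ∀ x ∈ Set.Icc (0:ℝ) 1, p (2*0+1) (1 - r₂ + r₂*x) =
      (∑ i ∈ Finset.range (0+1),
            p (2*i+1) r₁ * ((r₂*m₂)/(r₁*m₁))^(0-i) * q (2*0-2*i) (r₁*x))
          + (∑ i ∈ Finset.range (0+1),
            p (2*i) r₁ * (r₂/r₁)^(0-i) * (m₂/m₁)^(0-i+1) * p (2*0-2*i+1) (r₁*x))
          + (1-(r₁+r₂)) * ∑ i ∈ Finset.range 0,
            p (2*i+1) r₁ * (r₂/r₁)^(0-i-1) * (m₂/m₁)^(0-i) * p (2*0-2*i-1) (r₁*x) := by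
    intro x hx
    have h1 := R2 0 x hx
    have h2 := R1 0 x hx
    norm_num [hp0] at h1 h2
    norm_num [hp0, hq0]
    rw [h1, h2]
    field_simp
  -- even step
  have stepE : ∀ n : ℕ,
      (∀ x ∈ Set.Icc (0:ℝ) 1, p (2*n+1) (1 - r₂ + r₂*x) =
        (∑ i ∈ Finset.range (n+1),
            p (2*i+1) r₁ * ((r₂*m₂)/(r₁*m₁))^(n-i) * q (2*n-2*i) (r₁*x))
          + (∑ i ∈ Finset.range (n+1),
            p (2*i) r₁ * (r₂/r₁)^(n-i) * (m₂/m₁)^(n-i+1) * p (2*n-2*i+1) (r₁*x))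
          + (1-(r₁+r₂)) * ∑ i ∈ Finset.range n,
            p (2*i+1) r₁ * (r₂/r₁)^(n-i-1) * (m₂/m₁)^(n-i) * p (2*n-2*i-1) (r₁*x)) →
      (∀ x ∈ Set.Icc (0:ℝ) 1, p (2*(n+1)) (1 - r₂ + r₂*x) =
        (∑ i ∈ Finset.range ((n+1)+1),
            p (2*i) r₁ * ((r₂*m₂)/(r₁*m₁))^((n+1)-i) * p (2*(n+1)-2*i) (r₁*x))
          + (∑ i ∈ Finset.range (n+1),
            p (2*i+1) r₁ * (r₂/r₁)^((n+1)-i) * (m₂/m₁)^((n+1)-i-1) * q (2*(n+1)-2*i-1) (r₁*x))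
          + (1-(r₁+r₂)) * ∑ i ∈ Finset.range (n+1),
            p (2*i+1) r₁ * ((r₂*m₂)/(r₁*m₁))^((n+1)-i-1) * p (2*(n+1)-2*i-2) (r₁*x)) := by
    intro n ho x hx
    have hg1 : ∀ i ∈ Finset.range (n+1), Monotone (fun u : ℝ => q (2*n-2*i) (r₁*u)) :=
      fun i _ => haff1 _ (hqm _)
    have hg2 : ∀ i ∈ Finset.range (n+1), Monotone (fun u : ℝ => p (2*n-2*i+1) (r₁*u)) :=
      fun i _ => haff1 _ (hpm _)
    have hg3 : ∀ i ∈ Finset.range n, Monotone (fun u : ℝ => p (2*n-2*i-1) (r₁*u)) :=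
      fun i _ => haff1 _ (hpm _)
    have hS1 := hsumL (Finset.range (n+1)) (fun i => p (2*i+1) r₁ * ((r₂*m₂)/(r₁*m₁))^(n-i))
      (fun i => fun u => q (2*n-2*i) (r₁*u)) hg1 x
    have hS2 := hsumL (Finset.range (n+1)) (fun i => p (2*i) r₁ * (r₂/r₁)^(n-i) * (m₂/m₁)^(n-i+1))
      (fun i => fun u => p (2*n-2*i+1) (r₁*u)) hg2 x
    have hS3 := hsumL (Finset.range n) (fun i => p (2*i+1) r₁ * (r₂/r₁)^(n-i-1) * (m₂/m₁)^(n-i))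
      (fun i => fun u => p (2*n-2*i-1) (r₁*u)) hg3 x
    have h12 : IntervalIntegrable (fun u => (∑ i ∈ Finset.range (n+1), p (2*i+1) r₁ * ((r₂*m₂)/(r₁*m₁))^(n-i) * q (2*n-2*i) (r₁*u)) + (∑ i ∈ Finset.range (n+1), p (2*i) r₁ * (r₂/r₁)^(n-i) * (m₂/m₁)^(n-i+1) * p (2*n-2*i+1) (r₁*u))) volume 0 x := hS1.1.add hS2.1
    have h3 : IntervalIntegrable (fun u => (1-(r₁+r₂)) * (∑ i ∈ Finset.range n, p (2*i+1) r₁ * (r₂/r₁)^(n-i-1) * (m₂/m₁)^(n-i) * p (2*n-2*i-1) (r₁*u))) volume 0 x := hS3.1.const_mul _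
    have hI1 : ∀ i, i ≤ n → (∫ u in (0:ℝ)..x, q (2*n-2*i) (r₁*u)) = q (2*n-2*i+1) (r₁*x) / r₁ := by
      intro i hi
      rw [show 2*n-2*i = 2*(n-i) by omega, R5 (n-i) x]
      field_simp
    have hI2 : ∀ i, i ≤ n → (∫ u in (0:ℝ)..x, p (2*n-2*i+1) (r₁*u)) = p (2*n-2*i+2) (r₁*x) / r₁ := by
      intro i hi
      rw [show 2*n-2*i = 2*(n-i) by omega, R4 (n-i) x]
      field_simp
    have hI3 : ∀ i, i < n → (∫ u in (0:ℝ)..x, p (2*n-2*i-1) (r₁*u)) = p (2*n-2*i) (r₁*x) / r₁ := by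
      intro i hi
      rw [show 2*n-2*i-1 = 2*(n-i-1)+1 by omega, show 2*n-2*i = 2*(n-i-1)+2 by omega,
        R4 (n-i-1) x]
      field_simp
    have hcong : (∫ u in (0:ℝ)..x, p (2*n+1) (1 - r₂ + r₂*u))
        = ∫ u in (0:ℝ)..x, ((∑ i ∈ Finset.range (n+1),
            p (2*i+1) r₁ * ((r₂*m₂)/(r₁*m₁))^(n-i) * q (2*n-2*i) (r₁*u))
          + (∑ i ∈ Finset.range (n+1),
            p (2*i) r₁ * (r₂/r₁)^(n-i) * (m₂/m₁)^(n-i+1) * p (2*n-2*i+1) (r₁*u))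
          + (1-(r₁+r₂)) * ∑ i ∈ Finset.range n,
            p (2*i+1) r₁ * (r₂/r₁)^(n-i-1) * (m₂/m₁)^(n-i) * p (2*n-2*i-1) (r₁*u)) := by
      apply intervalIntegral.integral_congr
      intro u hu
      rw [Set.uIcc_of_le hx.1] at hu
      exact ho u ⟨hu.1, hu.2.trans hx.2⟩
    have hmain : r₂ * ∫ u in (0:ℝ)..x, p (2*n+1) (1 - r₂ + r₂*u)
        = (∑ i ∈ Finset.range (n+1),
            r₂ * (p (2*i+1) r₁ * ((r₂*m₂)/(r₁*m₁))^(n-i) * (q (2*n-2*i+1) (r₁*x) / r₁)))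
          + (∑ i ∈ Finset.range (n+1),
            r₂ * (p (2*i) r₁ * (r₂/r₁)^(n-i) * (m₂/m₁)^(n-i+1) * (p (2*n-2*i+2) (r₁*x) / r₁)))
          + (1-(r₁+r₂)) * ∑ i ∈ Finset.range n,
            r₂ * (p (2*i+1) r₁ * (r₂/r₁)^(n-i-1) * (m₂/m₁)^(n-i) * (p (2*n-2*i) (r₁*x) / r₁)) := by
      rw [hcong, intervalIntegral.integral_add h12 h3,
        intervalIntegral.integral_add hS1.1 hS2.1, intervalIntegral.integral_const_mul,
        hS1.2, hS2.2, hS3.2, mul_add, mul_add, mul_left_comm,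
        Finset.mul_sum, Finset.mul_sum, Finset.mul_sum]
      congr 1
      · congr 1
        · exact Finset.sum_congr rfl fun i hi => by
            rw [hI1 i (Nat.lt_succ_iff.mp (Finset.mem_range.mp hi))]
        · exact Finset.sum_congr rfl fun i hi => by
            rw [hI2 i (Nat.lt_succ_iff.mp (Finset.mem_range.mp hi))]
      · congr 1
        exact Finset.sum_congr rfl fun i hi => by rw [hI3 i (Finset.mem_range.mp hi)]
    have hSa : (∑ i ∈ Finset.range ((n+1)+1),
          p (2*i) r₁ * ((r₂*m₂)/(r₁*m₁))^((n+1)-i) * p (2*(n+1)-2*i) (r₁*x))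
        = (∑ i ∈ Finset.range (n+1),
            r₂ * (p (2*i) r₁ * (r₂/r₁)^(n-i) * (m₂/m₁)^(n-i+1) * (p (2*n-2*i+2) (r₁*x) / r₁)))
          + p (2*(n+1)) r₁ := by
      rw [Finset.sum_range_succ]
      congr 1
      · refine Finset.sum_congr rfl fun i hi => ?_
        have h1 : i ≤ n := Nat.lt_succ_iff.mp (Finset.mem_range.mp hi)
        rw [show 2*(n+1)-2*i = 2*n-2*i+2 by omega, show (n+1)-i = (n-i)+1 by omega]
        simp only [div_pow, mul_pow, pow_succ]
        field_simp
      · rw [show (n+1)-(n+1) = 0 by omega, show 2*(n+1)-2*(n+1) = 0 by omega, pow_zero, hp0,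
          mul_one, mul_one]
    have hSb : (∑ i ∈ Finset.range (n+1),
          p (2*i+1) r₁ * (r₂/r₁)^((n+1)-i) * (m₂/m₁)^((n+1)-i-1) * q (2*(n+1)-2*i-1) (r₁*x))
        = ∑ i ∈ Finset.range (n+1),
            r₂ * (p (2*i+1) r₁ * ((r₂*m₂)/(r₁*m₁))^(n-i) * (q (2*n-2*i+1) (r₁*x) / r₁)) := by
      refine Finset.sum_congr rfl fun i hi => ?_
      have h1 : i ≤ n := Nat.lt_succ_iff.mp (Finset.mem_range.mp hi)
      rw [show 2*(n+1)-2*i-1 = 2*n-2*i+1 by omega, show (n+1)-i-1 = n-i by omega,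
        show (n+1)-i = (n-i)+1 by omega]
      simp only [div_pow, mul_pow, pow_succ]
      field_simp
    have hSc : (∑ i ∈ Finset.range (n+1),
          p (2*i+1) r₁ * ((r₂*m₂)/(r₁*m₁))^((n+1)-i-1) * p (2*(n+1)-2*i-2) (r₁*x))
        = (∑ i ∈ Finset.range n,
            r₂ * (p (2*i+1) r₁ * (r₂/r₁)^(n-i-1) * (m₂/m₁)^(n-i) * (p (2*n-2*i) (r₁*x) / r₁)))
          + p (2*n+1) r₁ := by
      rw [Finset.sum_range_succ]
      congr 1
      · refine Finset.sum_congr rfl fun i hi => ?_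
        have h1 : i < n := Finset.mem_range.mp hi
        obtain ⟨j, hj⟩ : ∃ j, n - i = j + 1 := ⟨n - i - 1, by omega⟩
        rw [show 2*(n+1)-2*i-2 = 2*n-2*i by omega, show (n+1)-i-1 = n-i by omega,
          show n-i-1 = j by omega, hj]
        simp only [div_pow, mul_pow, pow_succ]
        field_simp
      · rw [show (n+1)-n-1 = 0 by omega, show 2*(n+1)-2*n-2 = 0 by omega, pow_zero, hp0,
          mul_one, mul_one]
    have R6' := R6 n x
    rw [show 2*n+2 = 2*(n+1) by ring] at R6'
    rw [R6', hSa, hSb, hSc]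
    linear_combination hmain
  -- odd step
  have stepO : ∀ n : ℕ,
      (∀ x ∈ Set.Icc (0:ℝ) 1, p (2*(n+1)) (1 - r₂ + r₂*x) =
        (∑ i ∈ Finset.range ((n+1)+1),
            p (2*i) r₁ * ((r₂*m₂)/(r₁*m₁))^((n+1)-i) * p (2*(n+1)-2*i) (r₁*x))
          + (∑ i ∈ Finset.range (n+1),
            p (2*i+1) r₁ * (r₂/r₁)^((n+1)-i) * (m₂/m₁)^((n+1)-i-1) * q (2*(n+1)-2*i-1) (r₁*x))
          + (1-(r₁+r₂)) * ∑ i ∈ Finset.range (n+1),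
            p (2*i+1) r₁ * ((r₂*m₂)/(r₁*m₁))^((n+1)-i-1) * p (2*(n+1)-2*i-2) (r₁*x)) →
      (∀ x ∈ Set.Icc (0:ℝ) 1, p (2*(n+1)+1) (1 - r₂ + r₂*x) =
        (∑ i ∈ Finset.range ((n+1)+1),
            p (2*i+1) r₁ * ((r₂*m₂)/(r₁*m₁))^((n+1)-i) * q (2*(n+1)-2*i) (r₁*x))
          + (∑ i ∈ Finset.range ((n+1)+1),
            p (2*i) r₁ * (r₂/r₁)^((n+1)-i) * (m₂/m₁)^((n+1)-i+1) * p (2*(n+1)-2*i+1) (r₁*x))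
          + (1-(r₁+r₂)) * ∑ i ∈ Finset.range (n+1),
            p (2*i+1) r₁ * (r₂/r₁)^((n+1)-i-1) * (m₂/m₁)^((n+1)-i) * p (2*(n+1)-2*i-1) (r₁*x)) := by
    intro n he x hx
    have hgA : ∀ i ∈ Finset.range ((n+1)+1), Monotone (fun u : ℝ => p (2*(n+1)-2*i) (r₁*u)) :=
      fun i _ => haff1 _ (hpm _)
    have hgB : ∀ i ∈ Finset.range (n+1), Monotone (fun u : ℝ => q (2*(n+1)-2*i-1) (r₁*u)) :=
      fun i _ => haff1 _ (hqm _)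
    have hgC : ∀ i ∈ Finset.range (n+1), Monotone (fun u : ℝ => p (2*(n+1)-2*i-2) (r₁*u)) :=
      fun i _ => haff1 _ (hpm _)
    have hT1 := hsumM (Finset.range ((n+1)+1)) (fun i => p (2*i) r₁ * ((r₂*m₂)/(r₁*m₁))^((n+1)-i))
      (fun i => fun t => p (2*(n+1)-2*i) (r₁*t)) hgA x
    have hT2 := hsumM (Finset.range (n+1))
      (fun i => p (2*i+1) r₁ * (r₂/r₁)^((n+1)-i) * (m₂/m₁)^((n+1)-i-1))
      (fun i => fun t => q (2*(n+1)-2*i-1) (r₁*t)) hgB x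
    have hT3 := hsumM (Finset.range (n+1)) (fun i => p (2*i+1) r₁ * ((r₂*m₂)/(r₁*m₁))^((n+1)-i-1))
      (fun i => fun t => p (2*(n+1)-2*i-2) (r₁*t)) hgC x
    have h12 : Integrable (fun t => (∑ i ∈ Finset.range ((n+1)+1), p (2*i) r₁ * ((r₂*m₂)/(r₁*m₁))^((n+1)-i) * p (2*(n+1)-2*i) (r₁*t)) + (∑ i ∈ Finset.range (n+1), p (2*i+1) r₁ * (r₂/r₁)^((n+1)-i) * (m₂/m₁)^((n+1)-i-1) * q (2*(n+1)-2*i-1) (r₁*t))) (μ.restrict (Set.Icc 0 x)) := hT1.1.add hT2.1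
    have h3 : Integrable (fun t => (1-(r₁+r₂)) * (∑ i ∈ Finset.range (n+1), p (2*i+1) r₁ * ((r₂*m₂)/(r₁*m₁))^((n+1)-i-1) * p (2*(n+1)-2*i-2) (r₁*t))) (μ.restrict (Set.Icc 0 x)) :=
      hT3.1.const_mul _
    have hJ1 : ∀ i, i ≤ n+1 →
        (∫ t in Set.Icc (0:ℝ) x, p (2*(n+1)-2*i) (r₁*t) ∂μ) = p (2*(n+1)-2*i+1) (r₁*x) / m₁ := by
      intro i hi
      rw [show 2*(n+1)-2*i = 2*((n+1)-i) by omega, R1 ((n+1)-i) x hx]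
      field_simp
    have hJ2 : ∀ i, i ≤ n →
        (∫ t in Set.Icc (0:ℝ) x, q (2*(n+1)-2*i-1) (r₁*t) ∂μ) = q (2*(n+1)-2*i) (r₁*x) / m₁ := by
      intro i hi
      rw [show 2*(n+1)-2*i-1 = 2*(n-i)+1 by omega, show 2*(n+1)-2*i = 2*(n-i)+2 by omega,
        R3 (n-i) x hx]
      field_simp
    have hJ3 : ∀ i, i ≤ n →
        (∫ t in Set.Icc (0:ℝ) x, p (2*(n+1)-2*i-2) (r₁*t) ∂μ) = p (2*(n+1)-2*i-1) (r₁*x) / m₁ := by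
      intro i hi
      rw [show 2*(n+1)-2*i-2 = 2*(n-i) by omega, show 2*(n+1)-2*i-1 = 2*(n-i)+1 by omega,
        R1 (n-i) x hx]
      field_simp
    have hcong : (∫ t in Set.Icc (0:ℝ) x, p (2*(n+1)) (1 - r₂ + r₂*t) ∂μ)
        = ∫ t in Set.Icc (0:ℝ) x, ((∑ i ∈ Finset.range ((n+1)+1),
            p (2*i) r₁ * ((r₂*m₂)/(r₁*m₁))^((n+1)-i) * p (2*(n+1)-2*i) (r₁*t))
          + (∑ i ∈ Finset.range (n+1),
            p (2*i+1) r₁ * (r₂/r₁)^((n+1)-i) * (m₂/m₁)^((n+1)-i-1) * q (2*(n+1)-2*i-1) (r₁*t))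
          + (1-(r₁+r₂)) * ∑ i ∈ Finset.range (n+1),
            p (2*i+1) r₁ * ((r₂*m₂)/(r₁*m₁))^((n+1)-i-1) * p (2*(n+1)-2*i-2) (r₁*t)) ∂μ := by
      refine setIntegral_congr_fun measurableSet_Icc fun t ht => ?_
      exact he t ⟨ht.1, ht.2.trans hx.2⟩
    have hmain : m₂ * ∫ t in Set.Icc (0:ℝ) x, p (2*(n+1)) (1 - r₂ + r₂*t) ∂μ
        = (∑ i ∈ Finset.range ((n+1)+1),
            m₂ * (p (2*i) r₁ * ((r₂*m₂)/(r₁*m₁))^((n+1)-i) * (p (2*(n+1)-2*i+1) (r₁*x) / m₁)))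
          + (∑ i ∈ Finset.range (n+1),
            m₂ * (p (2*i+1) r₁ * (r₂/r₁)^((n+1)-i) * (m₂/m₁)^((n+1)-i-1) * (q (2*(n+1)-2*i) (r₁*x) / m₁)))
          + (1-(r₁+r₂)) * ∑ i ∈ Finset.range (n+1),
            m₂ * (p (2*i+1) r₁ * ((r₂*m₂)/(r₁*m₁))^((n+1)-i-1) * (p (2*(n+1)-2*i-1) (r₁*x) / m₁)) := by
      rw [hcong, integral_add h12 h3, integral_add hT1.1 hT2.1, integral_const_mul,
        hT1.2, hT2.2, hT3.2, mul_add, mul_add, mul_left_comm,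
        Finset.mul_sum, Finset.mul_sum, Finset.mul_sum]
      congr 1
      · congr 1
        · exact Finset.sum_congr rfl fun i hi => by
            rw [hJ1 i (Nat.lt_succ_iff.mp (Finset.mem_range.mp hi))]
        · exact Finset.sum_congr rfl fun i hi => by
            rw [hJ2 i (Nat.lt_succ_iff.mp (Finset.mem_range.mp hi))]
      · congr 1
        exact Finset.sum_congr rfl fun i hi => by
          rw [hJ3 i (Nat.lt_succ_iff.mp (Finset.mem_range.mp hi))]
    have hOa : (∑ i ∈ Finset.range ((n+1)+1),
          p (2*i+1) r₁ * ((r₂*m₂)/(r₁*m₁))^((n+1)-i) * q (2*(n+1)-2*i) (r₁*x))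
        = (∑ i ∈ Finset.range (n+1),
            m₂ * (p (2*i+1) r₁ * (r₂/r₁)^((n+1)-i) * (m₂/m₁)^((n+1)-i-1) * (q (2*(n+1)-2*i) (r₁*x) / m₁)))
          + p (2*(n+1)+1) r₁ := by
      rw [Finset.sum_range_succ]
      congr 1
      · refine Finset.sum_congr rfl fun i hi => ?_
        have h1 : i ≤ n := Nat.lt_succ_iff.mp (Finset.mem_range.mp hi)
        rw [show (n+1)-i-1 = n-i by omega, show (n+1)-i = (n-i)+1 by omega]
        simp only [div_pow, mul_pow, pow_succ]
        field_simp
      · rw [show (n+1)-(n+1) = 0 by omega, show 2*(n+1)-2*(n+1) = 0 by omega, pow_zero, hq0,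
          mul_one, mul_one]
    have hOb : (∑ i ∈ Finset.range ((n+1)+1),
          p (2*i) r₁ * (r₂/r₁)^((n+1)-i) * (m₂/m₁)^((n+1)-i+1) * p (2*(n+1)-2*i+1) (r₁*x))
        = ∑ i ∈ Finset.range ((n+1)+1),
            m₂ * (p (2*i) r₁ * ((r₂*m₂)/(r₁*m₁))^((n+1)-i) * (p (2*(n+1)-2*i+1) (r₁*x) / m₁)) := by
      refine Finset.sum_congr rfl fun i hi => ?_
      simp only [div_pow, mul_pow, pow_succ]
      field_simp
    have hOc : (∑ i ∈ Finset.range (n+1),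
          p (2*i+1) r₁ * (r₂/r₁)^((n+1)-i-1) * (m₂/m₁)^((n+1)-i) * p (2*(n+1)-2*i-1) (r₁*x))
        = ∑ i ∈ Finset.range (n+1),
            m₂ * (p (2*i+1) r₁ * ((r₂*m₂)/(r₁*m₁))^((n+1)-i-1) * (p (2*(n+1)-2*i-1) (r₁*x) / m₁)) := by
      refine Finset.sum_congr rfl fun i hi => ?_
      have h1 : i ≤ n := Nat.lt_succ_iff.mp (Finset.mem_range.mp hi)
      rw [show (n+1)-i-1 = n-i by omega, show (n+1)-i = (n-i)+1 by omega]
      simp only [div_pow, mul_pow, pow_succ]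
      field_simp
    rw [R2 (n+1) x hx, hOa, hOb, hOc]
    linear_combination hmain
  -- main induction
  have main : ∀ n : ℕ,
      (∀ x ∈ Set.Icc (0:ℝ) 1, p (2*n+1) (1 - r₂ + r₂*x) =
        (∑ i ∈ Finset.range (n+1),
            p (2*i+1) r₁ * ((r₂*m₂)/(r₁*m₁))^(n-i) * q (2*n-2*i) (r₁*x))
          + (∑ i ∈ Finset.range (n+1),
            p (2*i) r₁ * (r₂/r₁)^(n-i) * (m₂/m₁)^(n-i+1) * p (2*n-2*i+1) (r₁*x))
          + (1-(r₁+r₂)) * ∑ i ∈ Finset.range n,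
            p (2*i+1) r₁ * (r₂/r₁)^(n-i-1) * (m₂/m₁)^(n-i) * p (2*n-2*i-1) (r₁*x)) ∧
      (∀ x ∈ Set.Icc (0:ℝ) 1, p (2*(n+1)) (1 - r₂ + r₂*x) =
        (∑ i ∈ Finset.range ((n+1)+1),
            p (2*i) r₁ * ((r₂*m₂)/(r₁*m₁))^((n+1)-i) * p (2*(n+1)-2*i) (r₁*x))
          + (∑ i ∈ Finset.range (n+1),
            p (2*i+1) r₁ * (r₂/r₁)^((n+1)-i) * (m₂/m₁)^((n+1)-i-1) * q (2*(n+1)-2*i-1) (r₁*x))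
          + (1-(r₁+r₂)) * ∑ i ∈ Finset.range (n+1),
            p (2*i+1) r₁ * ((r₂*m₂)/(r₁*m₁))^((n+1)-i-1) * p (2*(n+1)-2*i-2) (r₁*x)) := by
    intro n
    induction n with
    | zero => exact ⟨base, stepE 0 base⟩
    | succ k ih =>
      have ho := stepO k ih.2
      exact ⟨ho, stepE (k+1) ho⟩
  -- conclusion
  intro x hx
  constructor
  · intro n
    exact (main n).1 x hx
  · intro n hn
    obtain ⟨m, rfl⟩ : ∃ m, n = m + 1 := ⟨n - 1, by omega⟩
    exact (main m).2 x hx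
end

section
/- For all x ∈ [0,1]: for every n ∈ ℕ₀, p_{2n+1}(r₁x) = r₁^n m₁^{n+1} p_{2n+1}(x) and q_{2n+1}(r₁x) = r₁^{n+1} m₁^n q_{2n+1}(x); and for every n ∈ ℕ with n ≥ 1, p_{2n}(r₁x) = (r₁m₁)^n p_{2n}(x) and q_{2n}(r₁x) = (r₁m₁)^n q_{2n}(x). -/
open MeasureTheory

/-- Substitution in a Riemann integral. -/
lemma aux_r_scale (f : ℝ → ℝ) (r x : ℝ) :
    ∫ t in (0:ℝ)..(r*x), f t = r * ∫ t in (0:ℝ)..x, f (r*t) := by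
  have h := intervalIntegral.smul_integral_comp_mul_left (f := f) (a := 0) (b := x) r
  simp only [smul_eq_mul, mul_zero] at h
  exact h.symm

/-- The key scaling identity for the self-similar measure. -/
lemma aux_mu_scale (μ : Measure ℝ) [IsProbabilityMeasure μ] [NullSingletonClass μ]
    (hsupp : μ (Set.Icc (0:ℝ) 1)ᶜ = 0)
    (r₁ r₂ m₁ m₂ : ℝ)
    (hr₁ : 0 < r₁) (hr₂ : 0 < r₂) (hm₁ : 0 < m₁)
    (hrsum : r₁ + r₂ ≤ 1)
    (hss : μ = ENNReal.ofReal m₁ • Measure.map (fun x => r₁ * x) μ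
           + ENNReal.ofReal m₂ • Measure.map (fun x => r₂ * x + 1 - r₂) μ)
    (f : ℝ → ℝ) (hf : Monotone f) {x : ℝ} (hx0 : 0 ≤ x) (hx1 : x ≤ 1) :
    ∫ t in Set.Icc (0:ℝ) (r₁*x), f t ∂μ = m₁ * ∫ t in Set.Icc (0:ℝ) x, f (r₁*t) ∂μ := by
  set s : Set ℝ := Set.Icc (0:ℝ) (r₁*x) with hs
  set A : Measure ℝ := ENNReal.ofReal m₁ • Measure.map (fun x => r₁ * x) μ with hA
  set B : Measure ℝ := ENNReal.ofReal m₂ • Measure.map (fun x => r₂ * x + 1 - r₂) μ with hB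
  have hν : μ.restrict s = A.restrict s + B.restrict s := by
    conv_lhs => rw [hss]
    rw [Measure.restrict_add]
  have hint : Integrable f (μ.restrict s) :=
    (hf.monotoneOn _).integrableOn_isCompact isCompact_Icc
  rw [hν] at hint
  obtain ⟨hintA, hintB⟩ := integrable_add_measure.mp hint
  have hmeas : MeasurableSet s := measurableSet_Icc
  -- second piece vanishes
  have hIic : μ (Set.Iic (0:ℝ)) = 0 := by
    have h1 : μ (Set.Iio (0:ℝ)) = 0 := by
      refine measure_mono_null (fun t ht => ?_) hsupp
      simp only [Set.mem_compl_iff, Set.mem_Icc, not_and_or, not_le]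
      exact Or.inl ht
    have : Set.Iic (0:ℝ) = Set.Iio 0 ∪ {0} := by
      ext t; simp [le_iff_lt_or_eq]
    rw [this]
    exact measure_union_null h1 (measure_singleton 0)
  have hpre2 : μ ((fun t => r₂ * t + 1 - r₂) ⁻¹' s) = 0 := by
    refine measure_mono_null (fun t ht => ?_) hIic
    have h1 : r₂ * t + 1 - r₂ ≤ r₁ * x := ht.2
    have h2 : r₁ * x ≤ r₁ := by nlinarith
    simp only [Set.mem_Iic]
    nlinarith
  have hB0 : ∫ t in s, f t ∂B = 0 := by
    rw [hB, Measure.restrict_smul, integral_smul_measure,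
      setIntegral_map hmeas hf.measurable.aestronglyMeasurable
        ((by fun_prop : Measurable fun t : ℝ => r₂ * t + 1 - r₂).aemeasurable),
      Measure.restrict_eq_zero.mpr hpre2, integral_zero_measure, smul_zero]
  have hpre1 : (fun t => r₁ * t) ⁻¹' s = Set.Icc 0 x := by
    rw [hs]
    rw [show ((fun t => r₁ * t) ⁻¹' Set.Icc (0:ℝ) (r₁*x)) = (r₁ * ·) ⁻¹' Set.Icc (0:ℝ) (r₁*x) from rfl]
    rw [Set.preimage_const_mul_Icc₀ _ _ hr₁]
    rw [zero_div, mul_div_cancel_left₀ _ hr₁.ne']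
  have hAcalc : ∫ t in s, f t ∂A
      = m₁ * ∫ t in Set.Icc (0:ℝ) x, f (r₁*t) ∂μ := by
    rw [hA, Measure.restrict_smul, integral_smul_measure,
      setIntegral_map hmeas hf.measurable.aestronglyMeasurable
        (measurable_const_mul r₁).aemeasurable, hpre1,
      ENNReal.toReal_ofReal hm₁.le, smul_eq_mul]
  calc ∫ t in s, f t ∂μ = ∫ t, f t ∂(A.restrict s + B.restrict s) := by rw [hν]
    _ = (∫ t in s, f t ∂A) + ∫ t in s, f t ∂B := integral_add_measure hintA hintB
    _ = m₁ * ∫ t in Set.Icc (0:ℝ) x, f (r₁*t) ∂μ := by rw [hAcalc, hB0, add_zero]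

/-- Properties of the measure-integration step. -/
lemma aux_muStep (μ : Measure ℝ) [IsProbabilityMeasure μ] [NullSingletonClass μ]
    (f : ℝ → ℝ) (hf : Monotone f) (hf0 : ∀ x, 0 ≤ x → 0 ≤ f x) :
    Monotone (fun x => ∫ t in Set.Icc (0:ℝ) x, f t ∂μ) ∧
    (∀ x, 0 ≤ ∫ t in Set.Icc (0:ℝ) x, f t ∂μ) ∧
    (∀ x ≤ 0, (∫ t in Set.Icc (0:ℝ) x, f t ∂μ) = 0) := by
  refine ⟨fun a b hab => ?_, fun x => ?_, fun x hx => ?_⟩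
  · exact setIntegral_mono_set
      ((hf.monotoneOn _).integrableOn_isCompact isCompact_Icc)
      ((ae_restrict_iff' measurableSet_Icc).mpr (ae_of_all _ fun t ht => hf0 t ht.1))
      (Set.Icc_subset_Icc_right hab).eventuallyLE
  · exact setIntegral_nonneg measurableSet_Icc fun t ht => hf0 t ht.1
  · have h0 : μ (Set.Icc (0:ℝ) x) = 0 := by
      rcases eq_or_lt_of_le hx with h | h
      · subst h; rw [Set.Icc_self]; exact measure_singleton 0
      · rw [Set.Icc_eq_empty (not_le.mpr h)]; exact measure_empty
    rw [Measure.restrict_eq_zero.mpr h0, integral_zero_measure]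

/-- Properties of the Riemann-integration step. -/
lemma aux_rStep (f : ℝ → ℝ) (hf : Monotone f) (hf0 : ∀ x, 0 ≤ f x) (hz : ∀ x ≤ 0, f x = 0) :
    Monotone (fun x => ∫ t in (0:ℝ)..x, f t) ∧
    (∀ x, 0 ≤ ∫ t in (0:ℝ)..x, f t) ∧
    (∀ x ≤ 0, (∫ t in (0:ℝ)..x, f t) = 0) := by
  have hI : ∀ u v : ℝ, IntervalIntegrable f volume u v :=
    fun u v => (hf.monotoneOn _).intervalIntegrable
  have hmono : Monotone (fun x => ∫ t in (0:ℝ)..x, f t) := by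
    intro a b hab
    have hadd := intervalIntegral.integral_add_adjacent_intervals (hI 0 a) (hI a b)
    have h2 : 0 ≤ ∫ t in a..b, f t := intervalIntegral.integral_nonneg hab fun u _ => hf0 u
    simp only
    linarith
  have hzero : ∀ x ≤ 0, (∫ t in (0:ℝ)..x, f t) = 0 := by
    intro x hx
    have : (∫ t in (0:ℝ)..x, f t) = ∫ t in (0:ℝ)..x, (0:ℝ) := by
      refine intervalIntegral.integral_congr fun t ht => ?_
      exact hz t (le_trans ht.2 (by rw [max_eq_left hx]))
    simp [this]
  refine ⟨hmono, fun x => ?_, hzero⟩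
  rcases le_or_gt x 0 with h | h
  · exact le_of_eq (hzero x h).symm
  · exact le_trans (le_of_eq (hzero 0 le_rfl).symm) (hmono h.le)

theorem stmt_14
    (μ : Measure ℝ) [IsProbabilityMeasure μ] [NullSingletonClass μ]
    (hsupp : μ (Set.Icc (0:ℝ) 1)ᶜ = 0)
    (r₁ r₂ m₁ m₂ : ℝ)
    (hr₁ : 0 < r₁) (hr₂ : 0 < r₂) (hm₁ : 0 < m₁) (hm₂ : 0 < m₂)
    (hrsum : r₁ + r₂ ≤ 1) (hmsum : m₁ + m₂ = 1)
    (hss : μ = ENNReal.ofReal m₁ • Measure.map (fun x => r₁ * x) μ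
           + ENNReal.ofReal m₂ • Measure.map (fun x => r₂ * x + 1 - r₂) μ)
    (p q : ℕ → ℝ → ℝ)
    (hp0 : ∀ x : ℝ, p 0 x = 1) (hq0 : ∀ x : ℝ, q 0 x = 1)
    (hpodd : ∀ (n : ℕ) (x : ℝ), p (2*n+1) x = ∫ t in Set.Icc (0:ℝ) x, p (2*n) t ∂μ)
    (hpeven : ∀ (n : ℕ) (x : ℝ), p (2*n+2) x = ∫ t in (0:ℝ)..x, p (2*n+1) t)
    (hqodd : ∀ (n : ℕ) (x : ℝ), q (2*n+1) x = ∫ t in (0:ℝ)..x, q (2*n) t)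
    (hqeven : ∀ (n : ℕ) (x : ℝ), q (2*n+2) x = ∫ t in Set.Icc (0:ℝ) x, q (2*n+1) t ∂μ) :
    ∀ x ∈ Set.Icc (0:ℝ) 1,
      (∀ n : ℕ,
        p (2*n+1) (r₁*x) = r₁^n * m₁^(n+1) * p (2*n+1) x ∧
        q (2*n+1) (r₁*x) = r₁^(n+1) * m₁^n * q (2*n+1) x) ∧
      (∀ n : ℕ, 1 ≤ n →
        p (2*n) (r₁*x) = (r₁*m₁)^n * p (2*n) x ∧
        q (2*n) (r₁*x) = (r₁*m₁)^n * q (2*n) x) := by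
  -- functional equalities
  have hpoddF : ∀ n : ℕ, p (2*n+1) = fun x => ∫ t in Set.Icc (0:ℝ) x, p (2*n) t ∂μ :=
    fun n => funext (hpodd n)
  have hpevenF : ∀ n : ℕ, p (2*n+2) = fun x => ∫ t in (0:ℝ)..x, p (2*n+1) t :=
    fun n => funext (hpeven n)
  have hqoddF : ∀ n : ℕ, q (2*n+1) = fun x => ∫ t in (0:ℝ)..x, q (2*n) t :=
    fun n => funext (hqodd n)
  have hqevenF : ∀ n : ℕ, q (2*n+2) = fun x => ∫ t in Set.Icc (0:ℝ) x, q (2*n+1) t ∂μ :=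
    fun n => funext (hqeven n)
  -- invariant: monotonicity and nonnegativity along the chain
  have hC : ∀ n : ℕ, (Monotone (p (2*n)) ∧ (∀ x, 0 ≤ x → 0 ≤ p (2*n) x)) ∧
      (Monotone (q (2*n+1)) ∧ (∀ x, 0 ≤ x → 0 ≤ q (2*n+1) x)) := by
    intro n
    induction n with
    | zero =>
      have hq0' : Monotone (q 0) := fun a b _ => by rw [hq0, hq0]
      have hq1 : Monotone (q 1) ∧ (∀ x, 0 ≤ x → 0 ≤ q 1 x) := by
        have hq1x : ∀ x : ℝ, q 1 x = x := by
          intro x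
          have := hqodd 0 x
          simpa [hq0] using this
        exact ⟨fun a b hab => by rw [hq1x, hq1x]; exact hab,
          fun x hx => by rw [hq1x]; exact hx⟩
      exact ⟨⟨fun a b _ => by rw [hp0, hp0], fun x _ => by rw [hp0]; norm_num⟩, hq1⟩
    | succ n ih =>
      obtain ⟨⟨hpm, hpn⟩, hqm, hqn⟩ := ih
      -- p (2n+1)
      have h1 := aux_muStep μ (p (2*n)) hpm hpn
      have h1m : Monotone (p (2*n+1)) := by rw [hpoddF n]; exact h1.1
      have h1n : ∀ y : ℝ, 0 ≤ p (2*n+1) y := fun y => by rw [hpodd n y]; exact h1.2.1 y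
      have h1z : ∀ y : ℝ, y ≤ 0 → p (2*n+1) y = 0 :=
        fun y hy => by rw [hpodd n y]; exact h1.2.2 y hy
      -- p (2n+2)
      have h2 := aux_rStep (p (2*n+1)) h1m h1n h1z
      have h2m : Monotone (p (2*n+2)) := by rw [hpevenF n]; exact h2.1
      have h2n : ∀ y : ℝ, 0 ≤ p (2*n+2) y := fun y => by rw [hpeven n y]; exact h2.2.1 y
      -- q (2n+2)
      have h3 := aux_muStep μ (q (2*n+1)) hqm hqn
      have h3m : Monotone (q (2*n+2)) := by rw [hqevenF n]; exact h3.1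
      have h3n : ∀ y : ℝ, 0 ≤ q (2*n+2) y := fun y => by rw [hqeven n y]; exact h3.2.1 y
      have h3z : ∀ y : ℝ, y ≤ 0 → q (2*n+2) y = 0 :=
        fun y hy => by rw [hqeven n y]; exact h3.2.2 y hy
      -- q (2n+3)
      have h4 := aux_rStep (q (2*n+2)) h3m h3n h3z
      have h4m : Monotone (q (2*(n+1)+1)) := by rw [hqoddF (n+1)]; exact h4.1
      have h4n : ∀ y : ℝ, 0 ≤ q (2*(n+1)+1) y :=
        fun y => by rw [hqodd (n+1) y]; exact h4.2.1 y
      exact ⟨⟨h2m, fun y _ => h2n y⟩, h4m, fun y _ => h4n y⟩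
  -- main induction
  have main : ∀ n : ℕ, ∀ x ∈ Set.Icc (0:ℝ) 1,
      (p (2*n) (r₁*x) = (r₁*m₁)^n * p (2*n) x ∧ q (2*n) (r₁*x) = (r₁*m₁)^n * q (2*n) x) ∧
      (p (2*n+1) (r₁*x) = r₁^n * m₁^(n+1) * p (2*n+1) x ∧
        q (2*n+1) (r₁*x) = r₁^(n+1) * m₁^n * q (2*n+1) x) := by
    have stepOdd : ∀ n : ℕ,
        (∀ t ∈ Set.Icc (0:ℝ) 1, p (2*n) (r₁*t) = (r₁*m₁)^n * p (2*n) t ∧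
          q (2*n) (r₁*t) = (r₁*m₁)^n * q (2*n) t) →
        ∀ x, 0 ≤ x → x ≤ 1 →
        p (2*n+1) (r₁*x) = r₁^n * m₁^(n+1) * p (2*n+1) x ∧
          q (2*n+1) (r₁*x) = r₁^(n+1) * m₁^n * q (2*n+1) x := by
      intro n hIH x hx0 hx1
      constructor
      · rw [hpodd n (r₁*x), hpodd n x,
          aux_mu_scale μ hsupp r₁ r₂ m₁ m₂ hr₁ hr₂ hm₁ hrsum hss (p (2*n)) (hC n).1.1 hx0 hx1,
          setIntegral_congr_fun measurableSet_Icc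
            (fun t ht => (hIH t ⟨ht.1, le_trans ht.2 hx1⟩).1),
          integral_const_mul]
        ring
      · rw [hqodd n (r₁*x), hqodd n x, aux_r_scale (q (2*n)) r₁ x,
          intervalIntegral.integral_congr (a := (0:ℝ)) (b := x)
            (g := fun t => (r₁*m₁)^n * q (2*n) t) (fun t ht => by
              rw [Set.uIcc_of_le hx0] at ht
              exact (hIH t ⟨ht.1, le_trans ht.2 hx1⟩).2),
          intervalIntegral.integral_const_mul]
        ring
    have stepEven : ∀ n : ℕ,
        (∀ t ∈ Set.Icc (0:ℝ) 1, p (2*n+1) (r₁*t) = r₁^n * m₁^(n+1) * p (2*n+1) t ∧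
          q (2*n+1) (r₁*t) = r₁^(n+1) * m₁^n * q (2*n+1) t) →
        ∀ x, 0 ≤ x → x ≤ 1 →
        p (2*n+2) (r₁*x) = (r₁*m₁)^(n+1) * p (2*n+2) x ∧
          q (2*n+2) (r₁*x) = (r₁*m₁)^(n+1) * q (2*n+2) x := by
      intro n hIH x hx0 hx1
      constructor
      · rw [hpeven n (r₁*x), hpeven n x, aux_r_scale (p (2*n+1)) r₁ x,
          intervalIntegral.integral_congr (a := (0:ℝ)) (b := x)
            (g := fun t => r₁^n * m₁^(n+1) * p (2*n+1) t) (fun t ht => by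
              rw [Set.uIcc_of_le hx0] at ht
              exact (hIH t ⟨ht.1, le_trans ht.2 hx1⟩).1),
          intervalIntegral.integral_const_mul]
        ring
      · rw [hqeven n (r₁*x), hqeven n x,
          aux_mu_scale μ hsupp r₁ r₂ m₁ m₂ hr₁ hr₂ hm₁ hrsum hss (q (2*n+1)) (hC n).2.1 hx0 hx1,
          setIntegral_congr_fun measurableSet_Icc
            (fun t ht => (hIH t ⟨ht.1, le_trans ht.2 hx1⟩).2),
          integral_const_mul]
        ring
    intro n
    induction n with
    | zero =>
      have heven0 : ∀ t ∈ Set.Icc (0:ℝ) 1,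
          p 0 (r₁*t) = (r₁*m₁)^0 * p 0 t ∧ q 0 (r₁*t) = (r₁*m₁)^0 * q 0 t := by
        intro t _
        rw [hp0, hp0, hq0, hq0]
        norm_num
      intro x hx
      exact ⟨heven0 x hx, stepOdd 0 heven0 x hx.1 hx.2⟩
    | succ n ih =>
      intro x hx
      have hodd : ∀ t ∈ Set.Icc (0:ℝ) 1,
          p (2*n+1) (r₁*t) = r₁^n * m₁^(n+1) * p (2*n+1) t ∧
          q (2*n+1) (r₁*t) = r₁^(n+1) * m₁^n * q (2*n+1) t := fun t ht => (ih t ht).2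
      have heven : ∀ t ∈ Set.Icc (0:ℝ) 1,
          p (2*(n+1)) (r₁*t) = (r₁*m₁)^(n+1) * p (2*(n+1)) t ∧
          q (2*(n+1)) (r₁*t) = (r₁*m₁)^(n+1) * q (2*(n+1)) t :=
        fun t ht => stepEven n hodd t ht.1 ht.2
      exact ⟨heven x hx, stepOdd (n+1) heven x hx.1 hx.2⟩
  intro x hx
  refine ⟨fun n => (main n x hx).2, fun n _ => (main n x hx).1⟩
end

section
/- For all x ∈ [0,1] and z ∈ ℝ: c_{λ,μ}(z, r₁x) = c_{λ,μ}(√(r₁m₁)·z, x); s_{λ,μ}(z, r₁x) = √(r₁/m₁)·s_{λ,μ}(√(r₁m₁)·z, x); s_{μ,λ}(z, r₁x) = √(m₁/r₁)·s_{μ,λ}(√(r₁m₁)·z, x); and c_{μ,λ}(z, r₁x) = c_{μ,λ}(√(r₁m₁)·z, x). -/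
open MeasureTheory

theorem stmt_15
    (μ : Measure ℝ) [IsProbabilityMeasure μ] [NullSingletonClass μ]
    (hsupp : μ (Set.Icc (0:ℝ) 1)ᶜ = 0)
    (r₁ r₂ m₁ m₂ : ℝ)
    (hr₁ : 0 < r₁) (hr₂ : 0 < r₂) (hm₁ : 0 < m₁) (hm₂ : 0 < m₂)
    (hrsum : r₁ + r₂ ≤ 1) (hmsum : m₁ + m₂ = 1)
    (hss : μ = ENNReal.ofReal m₁ • Measure.map (fun x => r₁ * x) μ
           + ENNReal.ofReal m₂ • Measure.map (fun x => r₂ * x + 1 - r₂) μ)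
    (p q : ℕ → ℝ → ℝ)
    (hp0 : ∀ x : ℝ, p 0 x = 1) (hq0 : ∀ x : ℝ, q 0 x = 1)
    (hpodd : ∀ (n : ℕ) (x : ℝ), p (2*n+1) x = ∫ t in Set.Icc (0:ℝ) x, p (2*n) t ∂μ)
    (hpeven : ∀ (n : ℕ) (x : ℝ), p (2*n+2) x = ∫ t in (0:ℝ)..x, p (2*n+1) t)
    (hqodd : ∀ (n : ℕ) (x : ℝ), q (2*n+1) x = ∫ t in (0:ℝ)..x, q (2*n) t)
    (hqeven : ∀ (n : ℕ) (x : ℝ), q (2*n+2) x = ∫ t in Set.Icc (0:ℝ) x, q (2*n+1) t ∂μ)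
    (Sp Sq Cp Cq : ℝ → ℝ → ℝ)
    (hSp : ∀ (z x : ℝ), Sp z x = ∑' n : ℕ, (-1:ℝ)^n * z^(2*n+1) * p (2*n+1) x)
    (hSq : ∀ (z x : ℝ), Sq z x = ∑' n : ℕ, (-1:ℝ)^n * z^(2*n+1) * q (2*n+1) x)
    (hCp : ∀ (z x : ℝ), Cp z x = ∑' n : ℕ, (-1:ℝ)^n * z^(2*n) * p (2*n) x)
    (hCq : ∀ (z x : ℝ), Cq z x = ∑' n : ℕ, (-1:ℝ)^n * z^(2*n) * q (2*n) x) :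
    ∀ x ∈ Set.Icc (0:ℝ) 1, ∀ z : ℝ,
      Cp z (r₁*x) = Cp (Real.sqrt (r₁*m₁) * z) x ∧
      Sq z (r₁*x) = Real.sqrt (r₁/m₁) * Sq (Real.sqrt (r₁*m₁) * z) x ∧
      Sp z (r₁*x) = Real.sqrt (m₁/r₁) * Sp (Real.sqrt (r₁*m₁) * z) x ∧
      Cq z (r₁*x) = Cq (Real.sqrt (r₁*m₁) * z) x := by
  -- the measure vanishes on nonpositive half-lines
  have hIic : ∀ c : ℝ, c ≤ 0 → μ (Set.Iic c) = 0 := by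
    intro c hc
    have h0 : μ (Set.Iic (0:ℝ)) = 0 := by
      have hsplit : Set.Iic (0:ℝ) = Set.Iio 0 ∪ {0} := by
        ext t; simp [le_iff_lt_or_eq]
      have hIio : μ (Set.Iio (0:ℝ)) = 0 := by
        refine measure_mono_null ?_ hsupp
        intro t ht
        simp only [Set.mem_Iio] at ht
        simp only [Set.mem_compl_iff, Set.mem_Icc, not_and]
        intro h; linarith
      rw [hsplit]
      refine le_antisymm ?_ zero_le
      calc μ (Set.Iio 0 ∪ {0}) ≤ μ (Set.Iio 0) + μ {0} := measure_union_le _ _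
        _ = 0 := by rw [hIio, measure_singleton]; simp
    exact measure_mono_null (Set.Iic_subset_Iic.mpr hc) h0
  -- key decomposition of set integrals over [0, r₁ x]
  have keyB : ∀ (f : ℝ → ℝ), Measurable f → ∀ x : ℝ, 0 ≤ x → x ≤ 1 →
      (∫ t in Set.Icc (0:ℝ) (r₁*x), f t ∂μ) = m₁ * ∫ t in Set.Icc (0:ℝ) x, f (r₁*t) ∂μ := by
    intro f hf x hx0 hx1
    have hT1 : Measurable (fun t : ℝ => r₁ * t) := measurable_const_mul r₁
    have hT2 : Measurable (fun t : ℝ => r₂ * t + 1 - r₂) :=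
      ((measurable_const_mul r₂).add_const 1).sub_const r₂
    have hpre1 : (fun t : ℝ => r₁ * t) ⁻¹' Set.Icc 0 (r₁*x) = Set.Icc 0 x := by
      ext t
      simp only [Set.mem_preimage, Set.mem_Icc]
      constructor
      · rintro ⟨h1, h2⟩
        constructor <;> nlinarith
      · rintro ⟨h1, h2⟩
        constructor <;> nlinarith
    have hzero : μ ((fun t : ℝ => r₂ * t + 1 - r₂) ⁻¹' Set.Icc 0 (r₁*x)) = 0 := by
      refine measure_mono_null ?_ (hIic ((r₁*x - (1 - r₂))/r₂) ?_)
      · intro t ht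
        simp only [Set.mem_preimage, Set.mem_Icc] at ht
        simp only [Set.mem_Iic]
        rw [le_div_iff₀ hr₂]
        nlinarith [ht.2]
      · apply div_nonpos_of_nonpos_of_nonneg _ hr₂.le
        nlinarith
    have hrestrict : μ.restrict (Set.Icc 0 (r₁*x))
        = ENNReal.ofReal m₁ • Measure.map (fun t : ℝ => r₁*t) (μ.restrict (Set.Icc 0 x)) := by
      conv_lhs => rw [hss]
      rw [Measure.restrict_add, Measure.restrict_smul, Measure.restrict_smul,
          Measure.restrict_map hT1 measurableSet_Icc, Measure.restrict_map hT2 measurableSet_Icc,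
          hpre1, Measure.restrict_eq_zero.mpr hzero]
      simp
    calc (∫ t in Set.Icc (0:ℝ) (r₁*x), f t ∂μ)
        = ∫ t, f t ∂(ENNReal.ofReal m₁ • Measure.map (fun t : ℝ => r₁*t) (μ.restrict (Set.Icc 0 x))) := by
          rw [← hrestrict]
      _ = (ENNReal.ofReal m₁).toReal • ∫ t, f t ∂(Measure.map (fun t : ℝ => r₁*t) (μ.restrict (Set.Icc 0 x))) :=
          integral_smul_measure _ _
      _ = m₁ * ∫ t in Set.Icc (0:ℝ) x, f (r₁*t) ∂μ := by
          rw [integral_map hT1.aemeasurable hf.aestronglyMeasurable,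
            ENNReal.toReal_ofReal hm₁.le, smul_eq_mul]
  -- regularity of the μ-integration step
  have stepMu : ∀ g : ℝ → ℝ, Monotone g → (∀ x, 0 ≤ x → 0 ≤ g x) →
      Monotone (fun x => ∫ t in Set.Icc (0:ℝ) x, g t ∂μ) ∧
      (∀ x, 0 ≤ ∫ t in Set.Icc (0:ℝ) x, g t ∂μ) := by
    intro g hmono hpos
    have hmeas := hmono.measurable
    have hint : ∀ y : ℝ, IntegrableOn g (Set.Icc 0 y) μ := by
      intro y
      refine Integrable.mono' (integrable_const (|g y|)) hmeas.aestronglyMeasurable ?_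
      refine (ae_restrict_iff' measurableSet_Icc).mpr (ae_of_all _ fun t ht => ?_)
      rw [Real.norm_eq_abs]
      have hgt := hpos t ht.1
      rcases abs_cases (g t) with ⟨h1, _⟩ | ⟨h1, _⟩ <;>
        rcases abs_cases (g y) with ⟨h2, _⟩ | ⟨h2, _⟩ <;>
        · have := hmono ht.2; linarith
    constructor
    · intro x y hxy
      exact setIntegral_mono_set (hint y)
        ((ae_restrict_iff' measurableSet_Icc).mpr (ae_of_all _ fun t ht => hpos t ht.1))
        (HasSubset.Subset.eventuallyLE (Set.Icc_subset_Icc_right hxy))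
    · intro x
      exact setIntegral_nonneg measurableSet_Icc fun t ht => hpos t ht.1
  -- regularity of the volume-integration step
  have stepVol : ∀ g : ℝ → ℝ, Monotone g → (∀ x, 0 ≤ g x) →
      Monotone (fun x => ∫ t in (0:ℝ)..x, g t) ∧
      (∀ x, 0 ≤ x → 0 ≤ ∫ t in (0:ℝ)..x, g t) := by
    intro g hmono hpos
    have hmono2 : Monotone (fun x => ∫ t in (0:ℝ)..x, g t) := by
      intro x y hxy
      have hadd : (∫ t in (0:ℝ)..x, g t) + ∫ t in x..y, g t = ∫ t in (0:ℝ)..y, g t :=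
        intervalIntegral.integral_add_adjacent_intervals hmono.intervalIntegrable
          hmono.intervalIntegrable
      have hnn : 0 ≤ ∫ t in x..y, g t :=
        intervalIntegral.integral_nonneg hxy fun u _ => hpos u
      simp only []
      linarith
    exact ⟨hmono2, fun x hx => intervalIntegral.integral_nonneg hx fun u _ => hpos u⟩
  -- regularity invariants for p and q
  have hp0' : p 0 = fun _ => 1 := funext hp0
  have hq0' : q 0 = fun _ => 1 := funext hq0
  have hreg : ∀ n : ℕ,
      (Monotone (p (2*n)) ∧ (∀ x, 0 ≤ x → 0 ≤ p (2*n) x)) ∧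
      (Monotone (p (2*n+1)) ∧ (∀ x, 0 ≤ p (2*n+1) x)) ∧
      (Monotone (q (2*n)) ∧ (∀ x, 0 ≤ q (2*n) x)) ∧
      (Monotone (q (2*n+1)) ∧ (∀ x, 0 ≤ x → 0 ≤ q (2*n+1) x)) := by
    intro n
    induction n with
    | zero =>
        have hpe : Monotone (p 0) ∧ (∀ x, 0 ≤ x → 0 ≤ p 0 x) := by
          rw [hp0']; exact ⟨monotone_const, fun x _ => zero_le_one⟩
        have hqe : Monotone (q 0) ∧ (∀ x, 0 ≤ q 0 x) := by
          rw [hq0']; exact ⟨monotone_const, fun x => zero_le_one⟩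
        have hp1 : p (2*0+1) = fun x => ∫ t in Set.Icc (0:ℝ) x, p (2*0) t ∂μ :=
          funext (hpodd 0)
        have hq1 : q (2*0+1) = fun x => ∫ t in (0:ℝ)..x, q (2*0) t := funext (hqodd 0)
        refine ⟨hpe, ?_, hqe, ?_⟩
        · rw [hp1]
          exact ⟨(stepMu _ hpe.1 hpe.2).1, (stepMu _ hpe.1 hpe.2).2⟩
        · rw [hq1]
          exact ⟨(stepVol _ hqe.1 hqe.2).1, (stepVol _ hqe.1 hqe.2).2⟩
    | succ n ih =>
        obtain ⟨-, hpo, -, hqo⟩ := ih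
        have e1 : 2*(n+1) = 2*n+2 := by ring
        have e2 : 2*(n+1)+1 = 2*(n+1)+1 := rfl
        have hpE : p (2*(n+1)) = fun x => ∫ t in (0:ℝ)..x, p (2*n+1) t := by
          rw [e1]; exact funext (hpeven n)
        have hqE : q (2*(n+1)) = fun x => ∫ t in Set.Icc (0:ℝ) x, q (2*n+1) t ∂μ := by
          rw [e1]; exact funext (hqeven n)
        have hpe : Monotone (p (2*(n+1))) ∧ (∀ x, 0 ≤ x → 0 ≤ p (2*(n+1)) x) := by
          rw [hpE]; exact ⟨(stepVol _ hpo.1 hpo.2).1, (stepVol _ hpo.1 hpo.2).2⟩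
        have hqe : Monotone (q (2*(n+1))) ∧ (∀ x, 0 ≤ q (2*(n+1)) x) := by
          rw [hqE]; exact ⟨(stepMu _ hqo.1 hqo.2).1, (stepMu _ hqo.1 hqo.2).2⟩
        have hpO : p (2*(n+1)+1) = fun x => ∫ t in Set.Icc (0:ℝ) x, p (2*(n+1)) t ∂μ :=
          funext (hpodd (n+1))
        have hqO : q (2*(n+1)+1) = fun x => ∫ t in (0:ℝ)..x, q (2*(n+1)) t :=
          funext (hqodd (n+1))
        refine ⟨hpe, ?_, hqe, ?_⟩
        · rw [hpO]
          exact ⟨(stepMu _ hpe.1 hpe.2).1, (stepMu _ hpe.1 hpe.2).2⟩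
        · rw [hqO]
          exact ⟨(stepVol _ hqe.1 hqe.2).1, (stepVol _ hqe.1 hqe.2).2⟩
  have hpmeas : ∀ n : ℕ, Measurable (p (2*n)) := fun n => (hreg n).1.1.measurable
  have hqmeas : ∀ n : ℕ, Measurable (q (2*n+1)) := fun n => (hreg n).2.2.2.1.measurable
  -- scaling for odd p given scaling for even p
  have hPodd : ∀ n : ℕ,
      (∀ x : ℝ, 0 ≤ x → x ≤ 1 → p (2*n) (r₁*x) = (r₁*m₁)^n * p (2*n) x) →
      ∀ x : ℝ, 0 ≤ x → x ≤ 1 → p (2*n+1) (r₁*x) = m₁ * (r₁*m₁)^n * p (2*n+1) x := by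
    intro n hsc x hx0 hx1
    rw [hpodd n (r₁*x), keyB (p (2*n)) (hpmeas n) x hx0 hx1]
    have : (∫ t in Set.Icc (0:ℝ) x, p (2*n) (r₁*t) ∂μ)
        = ∫ t in Set.Icc (0:ℝ) x, (r₁*m₁)^n * p (2*n) t ∂μ := by
      refine setIntegral_congr_fun measurableSet_Icc fun t ht => ?_
      exact hsc t ht.1 (le_trans ht.2 hx1)
    rw [this, integral_const_mul, hpodd n x]
    ring
  -- scaling for odd q given scaling for even q
  have hQodd : ∀ n : ℕ,
      (∀ x : ℝ, 0 ≤ x → x ≤ 1 → q (2*n) (r₁*x) = (r₁*m₁)^n * q (2*n) x) →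
      ∀ x : ℝ, 0 ≤ x → x ≤ 1 → q (2*n+1) (r₁*x) = r₁ * (r₁*m₁)^n * q (2*n+1) x := by
    intro n hsc x hx0 hx1
    rw [hqodd n (r₁*x)]
    have hsub : (∫ t in (0:ℝ)..(r₁*x), q (2*n) t) = r₁ • ∫ t in (0:ℝ)..x, q (2*n) (r₁*t) := by
      rw [intervalIntegral.smul_integral_comp_mul_left, mul_zero]
    rw [hsub]
    have : (∫ t in (0:ℝ)..x, q (2*n) (r₁*t)) = ∫ t in (0:ℝ)..x, (r₁*m₁)^n * q (2*n) t := by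
      refine intervalIntegral.integral_congr fun t ht => ?_
      rw [Set.uIcc_of_le hx0] at ht
      exact hsc t ht.1 (le_trans ht.2 hx1)
    rw [this, intervalIntegral.integral_const_mul, hqodd n x]
    simp [smul_eq_mul]; ring
  -- scaling for even p and q, by induction
  have hscale : ∀ n : ℕ,
      (∀ x : ℝ, 0 ≤ x → x ≤ 1 → p (2*n) (r₁*x) = (r₁*m₁)^n * p (2*n) x) ∧
      (∀ x : ℝ, 0 ≤ x → x ≤ 1 → q (2*n) (r₁*x) = (r₁*m₁)^n * q (2*n) x) := by
    intro n
    induction n with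
    | zero => simp [hp0, hq0]
    | succ n ih =>
        have e1 : 2*(n+1) = 2*n+2 := by ring
        constructor
        · intro x hx0 hx1
          rw [e1, hpeven n (r₁*x), hpeven n x]
          have hsub : (∫ t in (0:ℝ)..(r₁*x), p (2*n+1) t)
              = r₁ • ∫ t in (0:ℝ)..x, p (2*n+1) (r₁*t) := by
            rw [intervalIntegral.smul_integral_comp_mul_left, mul_zero]
          rw [hsub]
          have : (∫ t in (0:ℝ)..x, p (2*n+1) (r₁*t))
              = ∫ t in (0:ℝ)..x, m₁ * (r₁*m₁)^n * p (2*n+1) t := by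
            refine intervalIntegral.integral_congr fun t ht => ?_
            rw [Set.uIcc_of_le hx0] at ht
            exact hPodd n ih.1 t ht.1 (le_trans ht.2 hx1)
          rw [this, intervalIntegral.integral_const_mul]
          simp [smul_eq_mul]; ring
        · intro x hx0 hx1
          rw [e1, hqeven n (r₁*x), hqeven n x,
            keyB (q (2*n+1)) (hqmeas n) x hx0 hx1]
          have : (∫ t in Set.Icc (0:ℝ) x, q (2*n+1) (r₁*t) ∂μ)
              = ∫ t in Set.Icc (0:ℝ) x, r₁ * (r₁*m₁)^n * q (2*n+1) t ∂μ := by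
            refine setIntegral_congr_fun measurableSet_Icc fun t ht => ?_
            exact hQodd n ih.2 t ht.1 (le_trans ht.2 hx1)
          rw [this, integral_const_mul]
          ring
  -- assemble
  intro x hx z
  obtain ⟨hx0, hx1⟩ := hx
  have hrm : (0:ℝ) ≤ r₁ * m₁ := by positivity
  have hsq : ∀ n : ℕ, (Real.sqrt (r₁*m₁) * z)^(2*n) = (r₁*m₁)^n * z^(2*n) := by
    intro n
    rw [mul_pow, pow_mul, Real.sq_sqrt hrm]
  have hsq1 : ∀ n : ℕ, (Real.sqrt (r₁*m₁) * z)^(2*n+1)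
      = (r₁*m₁)^n * z^(2*n) * (Real.sqrt (r₁*m₁) * z) := by
    intro n
    rw [pow_succ, hsq n]
  have hmix1 : Real.sqrt (r₁/m₁) * Real.sqrt (r₁*m₁) = r₁ := by
    rw [← Real.sqrt_mul (by positivity)]
    rw [show r₁/m₁*(r₁*m₁) = r₁^2 by field_simp]
    exact Real.sqrt_sq hr₁.le
  have hmix2 : Real.sqrt (m₁/r₁) * Real.sqrt (r₁*m₁) = m₁ := by
    rw [← Real.sqrt_mul (by positivity)]
    rw [show m₁/r₁*(r₁*m₁) = m₁^2 by field_simp]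
    exact Real.sqrt_sq hm₁.le
  have hzpow : ∀ n : ℕ, z^(2*n+1) = z^(2*n) * z := fun n => pow_succ z (2*n)
  refine ⟨?_, ?_, ?_, ?_⟩
  · rw [hCp z (r₁*x), hCp (Real.sqrt (r₁*m₁) * z) x]
    refine tsum_congr fun n => ?_
    rw [(hscale n).1 x hx0 hx1, hsq n]
    ring
  · rw [hSq z (r₁*x), hSq (Real.sqrt (r₁*m₁) * z) x, ← tsum_mul_left]
    refine tsum_congr fun n => ?_
    rw [hQodd n (hscale n).2 x hx0 hx1, hsq1 n, hzpow n]
    rw [show Real.sqrt (r₁/m₁) * ((-1:ℝ)^n * ((r₁*m₁)^n * z^(2*n) * (Real.sqrt (r₁*m₁) * z)) * q (2*n+1) x)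
      = (-1:ℝ)^n * ((r₁*m₁)^n * z^(2*n) * z) * (Real.sqrt (r₁/m₁) * Real.sqrt (r₁*m₁)) * q (2*n+1) x by ring,
      hmix1]
    ring
  · rw [hSp z (r₁*x), hSp (Real.sqrt (r₁*m₁) * z) x, ← tsum_mul_left]
    refine tsum_congr fun n => ?_
    rw [hPodd n (hscale n).1 x hx0 hx1, hsq1 n, hzpow n]
    rw [show Real.sqrt (m₁/r₁) * ((-1:ℝ)^n * ((r₁*m₁)^n * z^(2*n) * (Real.sqrt (r₁*m₁) * z)) * p (2*n+1) x)
      = (-1:ℝ)^n * ((r₁*m₁)^n * z^(2*n) * z) * (Real.sqrt (m₁/r₁) * Real.sqrt (r₁*m₁)) * p (2*n+1) x by ring,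
      hmix2]
    ring
  · rw [hCq z (r₁*x), hCq (Real.sqrt (r₁*m₁) * z) x]
    refine tsum_congr fun n => ?_
    rw [(hscale n).2 x hx0 hx1, hsq n]
    ring
end
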